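/- arXiv:1510.01952 — 4 statements merged into one kernel-verified Lean document; each statement's English description precedes it below -/
import Mathlib

section
/- For every integer n ≥ 1, the number of UDD-equivalence classes of ballot paths of length n equals, as a rational number, ∑_{i=0}^{⌊n/4⌋} ((n − 4i + 1)/(n − 3i + 1)) · C(n − 2i, i), where C(a, b) denotes the binomial coefficient. -/
/-- A path is a list of steps: `true` is an up-step U, `false` is a down-step D. -/
abbrev Step := Bool

/-- The height of the `j`-th lattice point of the path `p`. -/
def pathHeight (p : List Bool) (j : ℕ) : ℤ :=
  ((p.take j).count true : ℤ) - ((p.take j).count false : ℤ)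

/-- A ballot path: every prefix has at least as many U's as D's. -/
def IsBallot (p : List Bool) : Prop :=
  ∀ k : ℕ, (p.take k).count false ≤ (p.take k).count true

/-- A Dyck path: a ballot path with equally many U's and D's. -/
def IsDyck (p : List Bool) : Prop :=
  IsBallot p ∧ p.count true = p.count false

/-- The string `τ` occurs at (0-indexed) position `i` of the path `p`. -/
def OccursAt (τ p : List Bool) (i : ℕ) : Prop :=
  (p.drop i).take τ.length = τ

/-- Two paths are `τ`-equivalent: same length and occurrences of `τ` at the same positions. -/
def PathEquiv (τ p q : List Bool) : Prop :=
  p.length = q.length ∧ ∀ i : ℕ, OccursAt τ p i ↔ OccursAt τ q i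

/-- The setoid of `τ`-equivalence on ballot paths of length `n`. -/
def ballotSetoid (τ : List Bool) (n : ℕ) :
    Setoid {p : List Bool // IsBallot p ∧ p.length = n} where
  r p q := PathEquiv τ p.1 q.1
  iseqv := ⟨fun _ => ⟨rfl, fun _ => Iff.rfl⟩,
            fun h => ⟨h.1.symm, fun i => (h.2 i).symm⟩,
            fun h1 h2 => ⟨h1.1.trans h2.1, fun i => (h1.2 i).trans (h2.2 i)⟩⟩

/-- The number of `τ`-equivalence classes of ballot paths of length `n`. -/
noncomputable def numBallotClasses (τ : List Bool) (n : ℕ) : ℕ :=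
  Nat.card (Quotient (ballotSetoid τ n))

/-- The setoid of `τ`-equivalence on Dyck paths of semilength `n`. -/
def dyckSetoid (τ : List Bool) (n : ℕ) :
    Setoid {p : List Bool // IsDyck p ∧ p.length = 2 * n} where
  r p q := PathEquiv τ p.1 q.1
  iseqv := ⟨fun _ => ⟨rfl, fun _ => Iff.rfl⟩,
            fun h => ⟨h.1.symm, fun i => (h.2 i).symm⟩,
            fun h1 h2 => ⟨h1.1.trans h2.1, fun i => (h1.2 i).trans (h2.2 i)⟩⟩

/-- The number of `τ`-equivalence classes of Dyck paths of semilength `n`. -/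
noncomputable def numDyckClasses (τ : List Bool) (n : ℕ) : ℕ :=
  Nat.card (Quotient (dyckSetoid τ n))


open Classical

/-- count of `a` in a list as a card of a Finset of positions. -/
lemma list_count_eq_card_filter {α : Type*} [DecidableEq α] (l : List α) (a d : α) :
    l.count a = ((Finset.range l.length).filter (fun i => l.getD i d = a)).card := by
  induction l using List.reverseRecOn with
  | nil => simp
  | append_singleton l x ih =>
    rw [List.count_append, List.length_append]
    simp only [List.length_singleton, Finset.range_add_one, Finset.filter_insert]
    have hgd : ∀ i < l.length, (l ++ [x]).getD i d = l.getD i d := by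
      intro i hi; exact List.getD_append l [x] d i hi
    have hfe : (Finset.range l.length).filter (fun i => (l ++ [x]).getD i d = a)
        = (Finset.range l.length).filter (fun i => l.getD i d = a) := by
      apply Finset.filter_congr
      intro i hi
      rw [hgd i (Finset.mem_range.mp hi)]
    have hlast : (l ++ [x]).getD l.length d = x := by
      rw [List.getD_eq_getElem?_getD]
      simp
    by_cases hx : x = a
    · rw [if_pos (by rw [hlast, hx]), Finset.card_insert_of_notMem (by simp), hfe, ← ih]
      simp [List.count_singleton', hx]
    · rw [if_neg (by rw [hlast]; exact hx), hfe, ← ih]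
      simp [List.count_singleton', hx]

lemma occursAt_iff (p : List Bool) (i : ℕ) :
    OccursAt [true, false, false] p i ↔
      ∃ h : i + 3 ≤ p.length, p[i]'(by omega) = true ∧ p[i+1]'(by omega) = false ∧
        p[i+2]'(by omega) = false := by
  unfold OccursAt
  simp only [List.length_cons, List.length_nil]
  constructor
  · intro h
    have hl := congrArg List.length h
    simp [List.length_take, List.length_drop] at hl
    have hle : i + 3 ≤ p.length := by omega
    refine ⟨hle, ?_, ?_, ?_⟩
    · have := congrArg (fun l => l[0]?) h
      simp [List.getElem?_take, List.getElem?_drop] at this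
      rwa [List.getElem?_eq_getElem (by omega), Option.some_inj] at this
    · have := congrArg (fun l => l[1]?) h
      simp [List.getElem?_take, List.getElem?_drop] at this
      rwa [List.getElem?_eq_getElem (by omega), Option.some_inj] at this
    · have := congrArg (fun l => l[2]?) h
      simp [List.getElem?_take, List.getElem?_drop] at this
      rwa [List.getElem?_eq_getElem (by omega), Option.some_inj] at this
  · rintro ⟨hle, h0, h1, h2⟩
    apply List.ext_getElem
    · simp [List.length_take, List.length_drop]; omega
    · intro n hn1 hn2
      simp only [List.length_take, List.length_drop, lt_min_iff] at hn1
      obtain ⟨hn3, -⟩ := hn1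
      rw [List.getElem_take, List.getElem_drop]
      interval_cases n <;> simp_all

lemma occursAt_lt_length {p : List Bool} {i : ℕ} (h : OccursAt [true, false, false] p i) :
    i + 3 ≤ p.length := ((occursAt_iff p i).mp h).1

open Classical in
noncomputable def occ (n : ℕ) (p : List Bool) : Finset ℕ :=
  (Finset.range n).filter (fun i => OccursAt [true, false, false] p i)

lemma mem_occ {n : ℕ} {p : List Bool} (hp : p.length = n) {i : ℕ} :
    i ∈ occ n p ↔ OccursAt [true, false, false] p i := by
  classical
  simp only [occ, Finset.mem_filter, Finset.mem_range]
  constructor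
  · tauto
  · intro h
    exact ⟨by have := occursAt_lt_length h; omega, h⟩

lemma pathEquiv_iff_occ_eq {n : ℕ} {p q : List Bool} (hp : p.length = n) (hq : q.length = n) :
    PathEquiv [true, false, false] p q ↔ occ n p = occ n q := by
  constructor
  · intro h
    ext i
    rw [mem_occ hp, mem_occ hq]
    exact h.2 i
  · intro h
    refine ⟨hp.trans hq.symm, fun i => ?_⟩
    rw [← mem_occ hp, ← mem_occ hq, h]

lemma numBallotClasses_eq_card_range (n : ℕ) :
    numBallotClasses [true, false, false] n =
      Nat.card (Set.range (fun p : {p : List Bool // IsBallot p ∧ p.length = n} => occ n p.1)) := by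
  unfold numBallotClasses
  have hs : ballotSetoid [true, false, false] n =
      Setoid.ker (fun p : {p : List Bool // IsBallot p ∧ p.length = n} => occ n p.1) := by
    apply Setoid.ext
    intro a b
    exact (pathEquiv_iff_occ_eq a.2.2 b.2.2).trans Iff.rfl
  rw [hs]
  exact Nat.card_congr (Setoid.quotientKerEquivRange _)

def Valid (n : ℕ) (S : Finset ℕ) : Prop :=
  (∀ x ∈ S, 1 ≤ x ∧ x + 3 ≤ n) ∧
  (∀ x ∈ S, ∀ y ∈ S, x < y → x + 3 ≤ y) ∧
  (∀ x ∈ S, 4 * (S.filter (· ≤ x)).card ≤ x + 3)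

def dS (S : Finset ℕ) (j : ℕ) : Bool := decide ((1 ≤ j ∧ j - 1 ∈ S) ∨ (2 ≤ j ∧ j - 2 ∈ S))

def cpath (n : ℕ) (S : Finset ℕ) : List Bool := (List.range n).map (fun j => !dS S j)

lemma cpath_length (n : ℕ) (S : Finset ℕ) : (cpath n S).length = n := by simp [cpath]

lemma cpath_getElem (n : ℕ) (S : Finset ℕ) {j : ℕ} (h : j < (cpath n S).length) :
    (cpath n S)[j] = !dS S j := by
  simp [cpath]

lemma bool_count (l : List Bool) : l.count true + l.count false = l.length := by
  induction l with
  | nil => simp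
  | cons b t ih => cases b <;> simp [List.count_cons] <;> omega

lemma count_false_take (S : Finset ℕ) (n k : ℕ) :
    ((cpath n S).take k).count false =
      ((Finset.range (min k n)).filter (fun j => dS S j = true)).card := by
  classical
  rw [list_count_eq_card_filter (((cpath n S)).take k) false true]
  have hlen : ((cpath n S).take k).length = min k n := by simp [cpath_length]
  rw [hlen]
  congr 1
  apply Finset.filter_congr
  intro i hi
  have hi' : i < min k n := Finset.mem_range.mp hi
  have h1 : i < ((cpath n S).take k).length := by omega
  rw [List.getD_eq_getElem _ _ h1, List.getElem_take, cpath_getElem]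
  simp

lemma card_dS_le {S : Finset ℕ} {n : ℕ} (hV : Valid n S) (m : ℕ) :
    2 * ((Finset.range m).filter (fun j => dS S j = true)).card ≤ m := by
  classical
  set G : Finset ℕ := S.filter (fun s => s + 1 < m) with hG
  set G' : Finset ℕ := S.filter (fun s => s + 2 < m) with hG'
  have hsub : (Finset.range m).filter (fun j => dS S j = true) ⊆
      G.image (· + 1) ∪ G'.image (· + 2) := by
    intro j hj
    obtain ⟨hjm, hdj⟩ := Finset.mem_filter.mp hj
    rw [Finset.mem_range] at hjm
    rw [dS, decide_eq_true_eq] at hdj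
    rcases hdj with ⟨h1, hmem⟩ | ⟨h2, hmem⟩
    · apply Finset.mem_union_left
      exact Finset.mem_image.mpr ⟨j - 1, Finset.mem_filter.mpr ⟨hmem, by omega⟩, by omega⟩
    · apply Finset.mem_union_right
      exact Finset.mem_image.mpr ⟨j - 2, Finset.mem_filter.mpr ⟨hmem, by omega⟩, by omega⟩
  have hcard : ((Finset.range m).filter (fun j => dS S j = true)).card ≤ G.card + G'.card :=
    le_trans (Finset.card_le_card hsub)
      (le_trans (Finset.card_union_le _ _)
        (add_le_add (Finset.card_image_le) (Finset.card_image_le)))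
  by_cases hGe : G = ∅
  · have hG'e : G' = ∅ := by
      rw [Finset.eq_empty_iff_forall_notMem] at hGe ⊢
      intro x hx
      exact hGe x (Finset.mem_filter.mpr ⟨(Finset.mem_filter.mp hx).1, by
        have := (Finset.mem_filter.mp hx).2; omega⟩)
    have hz : ((Finset.range m).filter (fun j => dS S j = true)).card = 0 := by
      rw [hGe, hG'e] at hcard; simpa using hcard
    omega
  · have hne : G.Nonempty := Finset.nonempty_iff_ne_empty.mpr hGe
    set s := G.max' hne with hs
    have hsG : s ∈ G := G.max'_mem hne
    have hsS : s ∈ S := (Finset.mem_filter.mp hsG).1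
    have hsm : s + 1 < m := (Finset.mem_filter.mp hsG).2
    have hval : 4 * (S.filter (· ≤ s)).card ≤ s + 3 := hV.2.2 s hsS
    have hGsub : G ⊆ S.filter (· ≤ s) := by
      intro g hg
      exact Finset.mem_filter.mpr ⟨(Finset.mem_filter.mp hg).1, G.le_max' g hg⟩
    have hcG : G.card ≤ (S.filter (· ≤ s)).card := Finset.card_le_card hGsub
    by_cases hcase : s + 2 < m
    · have hG'G : G' ⊆ G := by
        intro x hx
        obtain ⟨h1, h2⟩ := Finset.mem_filter.mp hx
        exact Finset.mem_filter.mpr ⟨h1, by omega⟩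
      have := Finset.card_le_card hG'G
      omega
    · have hG'sub : G' ⊆ G.erase s := by
        intro x hx
        obtain ⟨h1, h2⟩ := Finset.mem_filter.mp hx
        refine Finset.mem_erase.mpr ⟨by omega, Finset.mem_filter.mpr ⟨h1, by omega⟩⟩
      have h1 := Finset.card_le_card hG'sub
      have h2 : (G.erase s).card + 1 = G.card := Finset.card_erase_add_one hsG
      omega

lemma cpath_isBallot {S : Finset ℕ} {n : ℕ} (hV : Valid n S) : IsBallot (cpath n S) := by
  intro k
  have h1 := count_false_take S n k
  have h2 := bool_count ((cpath n S).take k)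
  have h3 : ((cpath n S).take k).length = min k n := by simp [cpath_length]
  have h4 := card_dS_le hV (min k n)
  omega

lemma dS_eq_false_of_mem {S : Finset ℕ} {n : ℕ} (hV : Valid n S) {i : ℕ} (hi : i ∈ S) :
    dS S i = false := by
  rw [dS, decide_eq_false_iff_not]
  rintro (⟨h1, hmem⟩ | ⟨h2, hmem⟩)
  · have := hV.2.1 (i - 1) hmem i hi (by omega)
    omega
  · have := hV.2.1 (i - 2) hmem i hi (by omega)
    omega

lemma occ_cpath {S : Finset ℕ} {n : ℕ} (hV : Valid n S) : occ n (cpath n S) = S := by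
  ext i
  rw [mem_occ (cpath_length n S), occursAt_iff]
  constructor
  · rintro ⟨hle, h0, h1, h2⟩
    rw [cpath_getElem] at h0 h1
    have hd1 : dS S (i + 1) = true := by
      revert h1; cases dS S (i+1) <;> simp
    have hd0 : dS S i = false := by
      revert h0; cases dS S i <;> simp
    rw [dS, decide_eq_true_eq] at hd1
    rw [dS, decide_eq_false_iff_not] at hd0
    rcases hd1 with ⟨-, hmem⟩ | ⟨h2', hmem⟩
    · simpa using hmem
    · exfalso
      exact hd0 (Or.inl ⟨by omega, by rw [show i - 1 = i + 1 - 2 from by omega]; exact hmem⟩)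
  · intro hi
    have hlen : i + 3 ≤ (cpath n S).length := by
      rw [cpath_length]; exact (hV.1 i hi).2
    refine ⟨hlen, ?_, ?_, ?_⟩
    · rw [cpath_getElem, dS_eq_false_of_mem hV hi]; rfl
    · rw [cpath_getElem]
      have : dS S (i + 1) = true := by
        rw [dS, decide_eq_true_eq]
        exact Or.inl ⟨by omega, by simpa using hi⟩
      rw [this]; rfl
    · rw [cpath_getElem]
      have : dS S (i + 2) = true := by
        rw [dS, decide_eq_true_eq]
        exact Or.inr ⟨by omega, by simpa using hi⟩
      rw [this]; rfl

lemma occ_gap {p : List Bool} {n : ℕ} (hl : p.length = n) :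
    ∀ x ∈ occ n p, ∀ y ∈ occ n p, x < y → x + 3 ≤ y := by
  intro x hx y hy hxy
  by_contra hc
  obtain ⟨hx3, px0, px1, px2⟩ := (occursAt_iff p x).mp ((mem_occ hl).mp hx)
  obtain ⟨hy3, py0, py1, py2⟩ := (occursAt_iff p y).mp ((mem_occ hl).mp hy)
  have : y = x + 1 ∨ y = x + 2 := by omega
  rcases this with h | h <;> subst h
  · exact absurd (px1.symm.trans py0) (by simp)
  · exact absurd (px2.symm.trans py0) (by simp)

lemma valid_occ {p : List Bool} {n : ℕ} (hb : IsBallot p) (hl : p.length = n) :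
    Valid n (occ n p) := by
  classical
  have hgap := occ_gap hl
  have key : ∀ x ∈ occ n p, 4 * ((occ n p).filter (· ≤ x)).card ≤ x + 3 := by
    intro x hx
    obtain ⟨hx3, -, -, -⟩ := (occursAt_iff p x).mp ((mem_occ hl).mp hx)
    set m := x + 3 with hm
    have hmn : m ≤ n := by omega
    set F := (occ n p).filter (· ≤ x) with hF
    have hFocc : ∀ s ∈ F, s ∈ occ n p ∧ s ≤ x := fun s hs => Finset.mem_filter.mp hs
    -- the two images are disjoint
    have hdisj : Disjoint (F.image (· + 1)) (F.image (· + 2)) := by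
      rw [Finset.disjoint_left]
      intro a ha1 ha2
      obtain ⟨s, hs, hs1⟩ := Finset.mem_image.mp ha1
      obtain ⟨t, ht, ht1⟩ := Finset.mem_image.mp ha2
      have hst : s = t + 1 := by omega
      have := hgap t (hFocc t ht).1 s (hFocc s hs).1 (by omega)
      omega
    have hcard : (F.image (· + 1) ∪ F.image (· + 2)).card = 2 * F.card := by
      rw [Finset.card_union_of_disjoint hdisj,
        Finset.card_image_of_injective _ (add_left_injective 1),
        Finset.card_image_of_injective _ (add_left_injective 2)]
      ring
    have hsub : F.image (· + 1) ∪ F.image (· + 2) ⊆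
        (Finset.range ((p.take m).length)).filter (fun i => (p.take m).getD i true = false) := by
      intro a ha
      have hlen : (p.take m).length = m := by rw [List.length_take]; omega
      rcases Finset.mem_union.mp ha with h | h
      · obtain ⟨s, hs, hs1⟩ := Finset.mem_image.mp h
        obtain ⟨hsocc, hsx⟩ := hFocc s hs
        obtain ⟨hs3, -, ps1, -⟩ := (occursAt_iff p s).mp ((mem_occ hl).mp hsocc)
        have ham : a < m := by omega
        refine Finset.mem_filter.mpr ⟨by rw [hlen] at *; exact Finset.mem_range.mpr ham, ?_⟩
        subst hs1
        rw [List.getD_eq_getElem _ _ (by omega), List.getElem_take]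
        exact ps1
      · obtain ⟨s, hs, hs1⟩ := Finset.mem_image.mp h
        obtain ⟨hsocc, hsx⟩ := hFocc s hs
        obtain ⟨hs3, -, -, ps2⟩ := (occursAt_iff p s).mp ((mem_occ hl).mp hsocc)
        have ham : a < m := by omega
        refine Finset.mem_filter.mpr ⟨by rw [hlen] at *; exact Finset.mem_range.mpr ham, ?_⟩
        subst hs1
        rw [List.getD_eq_getElem _ _ (by omega), List.getElem_take]
        exact ps2
    have hcount := list_count_eq_card_filter (p.take m) false true
    have h2 : 2 * F.card ≤ (p.take m).count false := by
      rw [hcount, ← hcard]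
      exact Finset.card_le_card hsub
    have h3 := hb m
    have h4 := bool_count (p.take m)
    have h5 : (p.take m).length = m := by rw [List.length_take]; omega
    omega
  refine ⟨?_, hgap, key⟩
  intro x hx
  have h4 := key x hx
  have hxF : x ∈ (occ n p).filter (· ≤ x) := Finset.mem_filter.mpr ⟨hx, le_refl x⟩
  have : 1 ≤ ((occ n p).filter (· ≤ x)).card := Finset.card_pos.mpr ⟨x, hxF⟩
  obtain ⟨hx3, -, -, -⟩ := (occursAt_iff p x).mp ((mem_occ hl).mp hx)
  exact ⟨by omega, by omega⟩

open Classical in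
noncomputable def validFinsets (n : ℕ) : Finset (Finset ℕ) :=
  ((Finset.range n).powerset).filter (Valid n)

lemma mem_validFinsets {n : ℕ} {S : Finset ℕ} : S ∈ validFinsets n ↔ Valid n S := by
  classical
  simp only [validFinsets, Finset.mem_filter, Finset.mem_powerset]
  constructor
  · tauto
  · intro h
    refine ⟨fun x hx => Finset.mem_range.mpr ?_, h⟩
    have := (h.1 x hx).2
    omega

lemma numBallotClasses_eq_card (n : ℕ) :
    numBallotClasses [true, false, false] n = (validFinsets n).card := by
  rw [numBallotClasses_eq_card_range]
  have hr : Set.range (fun p : {p : List Bool // IsBallot p ∧ p.length = n} => occ n p.1) =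
      ↑(validFinsets n) := by
    ext S
    constructor
    · rintro ⟨p, rfl⟩
      exact Finset.mem_coe.mpr (mem_validFinsets.mpr (valid_occ p.2.1 p.2.2))
    · intro hS
      have hV : Valid n S := mem_validFinsets.mp (Finset.mem_coe.mp hS)
      exact ⟨⟨cpath n S, cpath_isBallot hV, cpath_length n S⟩, occ_cpath hV⟩
  rw [hr, Nat.card_coe_set_eq, Set.ncard_coe_finset]

open Classical in
noncomputable def Tset (n i : ℕ) : Finset (Finset ℕ) :=
  (validFinsets n).filter (fun S => S.card = i)

lemma mem_Tset {n i : ℕ} {S : Finset ℕ} : S ∈ Tset n i ↔ Valid n S ∧ S.card = i := by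
  classical
  simp only [Tset, Finset.mem_filter, mem_validFinsets]

lemma valid_card_le {n : ℕ} {S : Finset ℕ} (hV : Valid n S) (hne : S.Nonempty) :
    4 * S.card ≤ n := by
  classical
  set x := S.max' hne with hx
  have hxS : x ∈ S := S.max'_mem hne
  have hfe : S.filter (· ≤ x) = S := by
    apply Finset.filter_true_of_mem
    intro y hy
    exact S.le_max' y hy
  have := hV.2.2 x hxS
  rw [hfe] at this
  have := (hV.1 x hxS).2
  omega

lemma Tset_empty {n i : ℕ} (hi : 1 ≤ i) (hni : n < 4 * i) : Tset n i = ∅ := by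
  classical
  rw [Finset.eq_empty_iff_forall_notMem]
  intro S hS
  obtain ⟨hV, hc⟩ := mem_Tset.mp hS
  have hne : S.Nonempty := Finset.card_pos.mp (by omega)
  have := valid_card_le hV hne
  omega

lemma Tset_zero (n : ℕ) : Tset n 0 = {∅} := by
  classical
  ext S
  rw [mem_Tset, Finset.mem_singleton]
  constructor
  · rintro ⟨-, hc⟩
    exact Finset.card_eq_zero.mp hc
  · rintro rfl
    refine ⟨⟨by simp, by simp, by simp⟩, by simp⟩

lemma validFinsets_card_eq (n : ℕ) :
    (validFinsets n).card = ∑ i ∈ Finset.range (n / 4 + 1), (Tset n i).card := by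
  classical
  apply Finset.card_eq_sum_card_fiberwise
  intro S hS
  rw [Finset.mem_coe, Finset.mem_range]
  have hV := mem_validFinsets.mp hS
  rcases S.eq_empty_or_nonempty with rfl | hne
  · simp
  · have := valid_card_le hV hne
    have : S.card ≤ n / 4 := Nat.le_div_iff_mul_le (by norm_num) |>.mpr (by omega)
    omega

lemma Tset_filter_not_mem {n i : ℕ} (hi : 1 ≤ i) (hn : 4 * i ≤ n) :
    (Tset n i).filter (fun S => (n - 3) ∉ S) = Tset (n - 1) i := by
  classical
  have hn4 : 4 ≤ n := by omega
  ext S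
  rw [Finset.mem_filter, mem_Tset, mem_Tset]
  constructor
  · rintro ⟨⟨⟨hA, hgap, hcnt⟩, hc⟩, hnot⟩
    refine ⟨⟨fun x hx => ?_, hgap, hcnt⟩, hc⟩
    have h1 := hA x hx
    have h2 : x ≠ n - 3 := fun h => hnot (h ▸ hx)
    omega
  · rintro ⟨⟨hA, hgap, hcnt⟩, hc⟩
    have hni : (n - 3) ∉ S := by
      intro h
      have := (hA _ h).2
      omega
    refine ⟨⟨⟨fun x hx => ?_, hgap, hcnt⟩, hc⟩, hni⟩
    have := hA x hx
    omega

lemma Tset_filter_mem_card {n i : ℕ} (hi : 1 ≤ i) (hn : 4 * i ≤ n) :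
    ((Tset n i).filter (fun S => (n - 3) ∈ S)).card = (Tset (n - 3) (i - 1)).card := by
  classical
  have hn4 : 4 ≤ n := by omega
  have hmem' : ∀ {S' : Finset ℕ}, Valid (n - 3) S' → (n - 3) ∉ S' := by
    intro S' hV h
    have := (hV.1 _ h).2
    omega
  have hbi : ∀ S ∈ (Tset n i).filter (fun S => (n - 3) ∈ S), S.erase (n - 3) ∈ Tset (n - 3) (i - 1) := by
    intro S hS
    rw [Finset.mem_filter, mem_Tset] at hS
    obtain ⟨⟨⟨hA, hgap, hcnt⟩, hc⟩, hmem⟩ := hS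
    have hlt : ∀ x ∈ S, x ≠ n - 3 → x + 3 ≤ n - 3 := by
      intro x hx hne
      have h1 := (hA x hx).2
      exact hgap x hx (n - 3) hmem (by omega)
    rw [mem_Tset]
    refine ⟨⟨fun x hx => ?_, fun x hx y hy hxy => ?_, fun x hx => ?_⟩, ?_⟩
    · obtain ⟨hxS, hxne⟩ := Finset.mem_erase.mp hx |>.symm.imp id id
      refine ⟨(hA x (Finset.mem_erase.mp hx).2).1, hlt x (Finset.mem_erase.mp hx).2 (Finset.mem_erase.mp hx).1⟩
    · exact hgap x (Finset.mem_erase.mp hx).2 y (Finset.mem_erase.mp hy).2 hxy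
    · have hxS := (Finset.mem_erase.mp hx).2
      have hxne := (Finset.mem_erase.mp hx).1
      have hfe : (S.erase (n - 3)).filter (· ≤ x) = S.filter (· ≤ x) := by
        ext y
        simp only [Finset.mem_filter, Finset.mem_erase]
        constructor
        · tauto
        · rintro ⟨hyS, hyx⟩
          have hx3 := hlt x hxS hxne
          exact ⟨⟨by omega, hyS⟩, hyx⟩
      rw [hfe]
      exact hcnt x hxS
    · rw [Finset.card_erase_of_mem hmem, hc]
  have hbj : ∀ S' ∈ Tset (n - 3) (i - 1), insert (n - 3) S' ∈ (Tset n i).filter (fun S => (n - 3) ∈ S) := by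
    intro S' hS'
    rw [mem_Tset] at hS'
    obtain ⟨hV', hc'⟩ := hS'
    obtain ⟨hA, hgap, hcnt⟩ := hV'
    have hni : (n - 3) ∉ S' := hmem' ⟨hA, hgap, hcnt⟩
    have hub : ∀ x ∈ S', x + 3 ≤ n - 3 := fun x hx => (hA x hx).2
    rw [Finset.mem_filter, mem_Tset]
    refine ⟨⟨⟨fun x hx => ?_, fun x hx y hy hxy => ?_, fun x hx => ?_⟩, ?_⟩, Finset.mem_insert_self _ _⟩
    · rcases Finset.mem_insert.mp hx with rfl | hx'
      · omega
      · have := hA x hx'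
        omega
    · rcases Finset.mem_insert.mp hx with rfl | hx' <;> rcases Finset.mem_insert.mp hy with rfl | hy'
      · omega
      · have := hub y hy'; omega
      · have := hub x hx'; omega
      · exact hgap x hx' y hy' hxy
    · rcases Finset.mem_insert.mp hx with rfl | hx'
      · have hfe : (insert (n - 3) S').filter (· ≤ n - 3) = insert (n - 3) S' := by
          apply Finset.filter_true_of_mem
          intro y hy
          rcases Finset.mem_insert.mp hy with rfl | hy'
          · exact le_refl _
          · have := hub y hy'; omega
        rw [hfe, Finset.card_insert_of_notMem hni, hc']
        omega
      · have hfe : (insert (n - 3) S').filter (· ≤ x) = S'.filter (· ≤ x) := by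
          ext y
          simp only [Finset.mem_filter, Finset.mem_insert]
          have := hub x hx'
          constructor
          · rintro ⟨rfl | hyS, hyx⟩
            · omega
            · exact ⟨hyS, hyx⟩
          · tauto
        rw [hfe]
        exact hcnt x hx'
    · rw [Finset.card_insert_of_notMem hni, hc']
      omega
  exact Finset.card_bij' (fun S _ => S.erase (n - 3)) (fun S' _ => insert (n - 3) S')
    hbi hbj
    (fun S hS => Finset.insert_erase (Finset.mem_filter.mp hS).2)
    (fun S' hS' => Finset.erase_insert (hmem' (mem_Tset.mp hS').1))

lemma Tset_card_rec {n i : ℕ} (hi : 1 ≤ i) (hn : 4 * i ≤ n) :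
    (Tset n i).card = (Tset (n - 1) i).card + (Tset (n - 3) (i - 1)).card := by
  classical
  have := Finset.card_filter_add_card_filter_not (s := Tset n i)
    (p := fun S => (n - 3) ∈ S)
  have hA : (Tset n i).filter (fun S => ¬ (n - 3) ∈ S) = Tset (n - 1) i := by
    rw [← Tset_filter_not_mem hi hn]
  rw [← Tset_filter_mem_card hi hn, ← hA]
  omega

lemma Tcard_formula : ∀ n i : ℕ, 4 * i ≤ n + 1 →
    ((Tset n i).card : ℚ) =
      ((n : ℚ) - 4 * i + 1) / ((n : ℚ) - 3 * i + 1) * ((n - 2 * i).choose i : ℚ) := by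
  intro n
  induction n using Nat.strong_induction_on with
  | _ n IH =>
    intro i hi4
    rcases Nat.eq_zero_or_pos i with rfl | hi
    · rw [Tset_zero]
      have hne : (n : ℚ) + 1 ≠ 0 := by positivity
      simp only [Finset.card_singleton, Nat.cast_zero, Nat.cast_one, mul_zero, sub_zero,
        Nat.mul_zero, Nat.sub_zero, Nat.choose_zero_right, Nat.cast_ofNat]
      rw [div_self hne]
      simp
    · rcases (by omega : 4 * i = n + 1 ∨ 4 * i ≤ n) with he | hle
      · rw [Tset_empty hi (by omega)]
        have hnum : (n : ℚ) - 4 * i + 1 = 0 := by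
          have : ((4 * i : ℕ) : ℚ) = ((n + 1 : ℕ) : ℚ) := by rw [he]
          push_cast at this
          linarith
        rw [hnum]
        simp
      · have hn4 : 4 ≤ n := by omega
        have hrec := Tset_card_rec hi hle
        have h1 := IH (n - 1) (by omega) i (by omega)
        have h2 := IH (n - 3) (by omega) (i - 1) (by omega)
        set m := n - 2 * i - 1 with hm
        have hm1 : (n - 1) - 2 * i = m := by omega
        have hm2 : (n - 3) - 2 * (i - 1) = m := by omega
        have hm3 : n - 2 * i = m + 1 := by omega
        have hcast1 : ((n - 1 : ℕ) : ℚ) = (n : ℚ) - 1 := by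
          push_cast [Nat.cast_sub (by omega : 1 ≤ n)]; ring
        have hcast3 : ((n - 3 : ℕ) : ℚ) = (n : ℚ) - 3 := by
          push_cast [Nat.cast_sub (by omega : 3 ≤ n)]; ring
        have hcasti : ((i - 1 : ℕ) : ℚ) = (i : ℚ) - 1 := by
          push_cast [Nat.cast_sub (by omega : 1 ≤ i)]; ring
        rw [hm1, hcast1] at h1
        rw [hm2, hcast3, hcasti] at h2
        have hcastm : ((m : ℕ) : ℚ) = (n : ℚ) - 2 * i - 1 := by
          rw [hm, Nat.cast_sub (by omega : 1 ≤ n - 2 * i), Nat.cast_sub (by omega : 2 * i ≤ n)]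
          push_cast
          ring
        -- choose identities
        have hp : ((m + 1).choose i : ℚ) = (m.choose (i - 1) : ℚ) + (m.choose i : ℚ) := by
          rw [show i = (i - 1) + 1 by omega, Nat.choose_succ_succ]
          push_cast
          ring
        have hs0 : (m + 1) * m.choose (i - 1) = (m + 1).choose i * i := by
          have := Nat.add_one_mul_choose_eq m (i - 1)
          rwa [show i - 1 + 1 = i from by omega] at this
        have hs : ((m : ℚ) + 1) * (m.choose (i - 1) : ℚ) = ((m + 1).choose i : ℚ) * i := by
          exact_mod_cast hs0
        set A : ℚ := (n : ℚ) - 3 * i with hA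
        have hAeq : A = (m : ℚ) + 1 - i := by rw [hA, hcastm]; ring
        have hrel : (i : ℚ) * (m.choose i : ℚ) = A * (m.choose (i - 1) : ℚ) := by
          rw [hAeq]
          linear_combination -hs - (i : ℚ) * hp
        have hApos : 0 < A := by
          rw [hA]
          have : (4 * i : ℚ) ≤ (n : ℚ) := by exact_mod_cast hle
          have hi1 : (1 : ℚ) ≤ (i : ℚ) := by exact_mod_cast hi
          linarith
        have hA0 : A ≠ 0 := ne_of_gt hApos
        have hA1 : A + 1 ≠ 0 := by positivity
        have hgoal : ((Tset n i).card : ℚ) = ((Tset (n-1) i).card : ℚ) + ((Tset (n-3) (i-1)).card : ℚ) := by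
          exact_mod_cast congrArg (fun x : ℕ => (x : ℚ)) hrec
        rw [hgoal, h1, h2, hm3, hp]
        set b : ℚ := (m.choose i : ℚ)
        set c : ℚ := (m.choose (i - 1) : ℚ)
        have key : ∀ b c : ℚ, (i : ℚ) * b = A * c →
            (A - i + 1) / (A + 1) * (c + b) = (A - i) / A * b + (A - i + 2) / (A + 1) * c := by
          intro b c h
          rw [div_mul_eq_mul_div, div_mul_eq_mul_div, div_mul_eq_mul_div, div_add_div _ _ hA0 hA1,
            div_eq_div_iff hA1 (mul_ne_zero hA0 hA1)]
          linear_combination (A + 1) * h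
        have hk := key b c hrel
        have e1 : (n : ℚ) - 4 * i + 1 = A - i + 1 := by rw [hA]; ring
        have e2 : (n : ℚ) - 3 * i + 1 = A + 1 := by rw [hA]
        have e3 : (n : ℚ) - 1 - 4 * i + 1 = A - i := by rw [hA]; ring
        have e4 : (n : ℚ) - 1 - 3 * i + 1 = A := by rw [hA]; ring
        have e5 : (n : ℚ) - 3 - 4 * ((i : ℚ) - 1) + 1 = A - i + 2 := by rw [hA]; ring
        have e6 : (n : ℚ) - 3 - 3 * ((i : ℚ) - 1) + 1 = A + 1 := by rw [hA]; ring
        rw [e1, e2, e3, e4, e5, e6]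
        exact hk.symm

/-- the number of UDD-equivalence classes of ballot paths of length
`n ≥ 1` equals `∑_{i=0}^{⌊n/4⌋} ((n-4i+1)/(n-3i+1)) · binom(n-2i, i)`. -/
theorem udd_classes_formula (n : ℕ) (hn : 1 ≤ n) :
    (numBallotClasses [true, false, false] n : ℚ) =
      ∑ i ∈ Finset.range (n / 4 + 1),
        (((n : ℚ) - 4 * i + 1) / ((n : ℚ) - 3 * i + 1)) * ((n - 2 * i).choose i : ℚ) := by
  rw [numBallotClasses_eq_card, validFinsets_card_eq]
  push_cast
  apply Finset.sum_congr rfl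
  intro i hi
  rw [Finset.mem_range] at hi
  have h4 : 4 * i ≤ n + 1 := by
    have : i ≤ n / 4 := by omega
    have := Nat.div_mul_le_self n 4
    omega
  exact Tcard_formula n i h4
end

section
/- For every integer n ≥ 0, the number of DDU-equivalence classes of ballot paths of length n + 1 equals the number of UDD-equivalence classes of ballot paths of length n. -/
section DduUddAux

/-- Boolean test for a DDU occurrence. -/
def dduB (p : List Bool) (i : ℕ) : Bool :=
  (p[i]? == some false) && (p[i+1]? == some false) && (p[i+2]? == some true)

/-- Boolean test for a UDD occurrence. -/
def uddB (p : List Bool) (i : ℕ) : Bool :=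
  (p[i]? == some true) && (p[i+1]? == some false) && (p[i+2]? == some false)

lemma take3_eq (l : List Bool) (a b c : Bool) :
    l.take 3 = [a,b,c] ↔ l[0]? = some a ∧ l[1]? = some b ∧ l[2]? = some c := by
  match l with
  | [] => simp
  | [x] => simp
  | [x,y] => simp
  | x::y::z::rest => simp [List.take]

lemma occursAt_ddu_iff (p : List Bool) (i : ℕ) :
    OccursAt [false,false,true] p i ↔ dduB p i = true := by
  show (p.drop i).take 3 = _ ↔ _
  rw [take3_eq]
  simp [dduB, List.getElem?_drop, and_assoc]

lemma occursAt_udd_iff (p : List Bool) (i : ℕ) :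
    OccursAt [true,false,false] p i ↔ uddB p i = true := by
  show (p.drop i).take 3 = _ ↔ _
  rw [take3_eq]
  simp [uddB, List.getElem?_drop, and_assoc]

lemma dduB_elim {p : List Bool} {i : ℕ} (h : dduB p i = true) :
    p[i]? = some false ∧ p[i+1]? = some false ∧ p[i+2]? = some true := by
  simpa [dduB, and_assoc] using h

lemma uddB_elim {p : List Bool} {i : ℕ} (h : uddB p i = true) :
    p[i]? = some true ∧ p[i+1]? = some false ∧ p[i+2]? = some false := by
  simpa [uddB, and_assoc] using h

lemma dduB_intro {p : List Bool} {i : ℕ} (h1 : p[i]? = some false)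
    (h2 : p[i+1]? = some false) (h3 : p[i+2]? = some true) : dduB p i = true := by
  simp [dduB, h1, h2, h3]

lemma uddB_intro {p : List Bool} {i : ℕ} (h1 : p[i]? = some true)
    (h2 : p[i+1]? = some false) (h3 : p[i+2]? = some false) : uddB p i = true := by
  simp [uddB, h1, h2, h3]

lemma lt_of_getElem?_some {l : List Bool} {j : ℕ} {b : Bool} (h : l[j]? = some b) :
    j < l.length := by
  by_contra hc
  rw [List.getElem?_eq_none (le_of_not_gt hc)] at h
  exact absurd h (by simp)

lemma count_take_succ (l : List Bool) (b : Bool) (k : ℕ) :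
    (l.take (k+1)).count b = (l.take k).count b + (if l[k]? = some b then 1 else 0) := by
  rw [List.take_succ, List.count_append]
  congr 1
  cases h : l[k]? with
  | none => simp [h]
  | some c => by_cases hc : c = b <;> simp [h, hc, List.count_singleton]

lemma count_le_of_pointwise {l l' : List Bool} {b : Bool} (k : ℕ)
    (h : ∀ j < k, l[j]? = some b → l'[j]? = some b) :
    (l.take k).count b ≤ (l'.take k).count b := by
  induction k with
  | zero => simp
  | succ k ih =>
    rw [count_take_succ, count_take_succ]
    have h1 := ih (fun j hj => h j (Nat.lt_succ_of_lt hj))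
    by_cases hk : l[k]? = some b
    · rw [if_pos (h k (Nat.lt_succ_self k) hk), if_pos hk]; omega
    · simp only [if_neg hk]; split <;> omega

lemma ballot_of_take_le {l : List Bool}
    (h : ∀ k ≤ l.length, (l.take k).count false ≤ (l.take k).count true) :
    IsBallot l := by
  intro k
  rcases le_or_gt k l.length with hk | hk
  · exact h k hk
  · rw [List.take_of_length_le hk.le]
    simpa using h l.length le_rfl

lemma ballot_head {p : List Bool} (hp : IsBallot p) : p[0]? ≠ some false := by
  intro h
  match p, h with
  | false :: rest, h => simpa using hp 1
  | true :: rest, h => simp at h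

lemma ballot_ddu0 {p : List Bool} (hp : IsBallot p) : dduB p 0 = false := by
  have := ballot_head hp
  simp only [dduB, Bool.and_eq_false_iff, beq_eq_false_iff_ne, ne_eq]
  tauto

lemma ballot_udd0 {q : List Bool} (hq : IsBallot q) : uddB q 0 = false := by
  by_contra h
  rw [Bool.not_eq_false] at h
  obtain ⟨h0, h1, h2⟩ := uddB_elim h
  match q with
  | a :: b :: c :: rest =>
    simp_all only [List.getElem?_cons_zero, List.getElem?_cons_succ, Option.some.injEq]
    subst h0 h1 h2
    simpa using hq 3

/-- Canonical map: from a path of length m produce a path of length m - 1 whose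
UDD-occurrences are at positions t iff DDU occurs at t+1 in p. -/
def fMap (p : List Bool) : List Bool :=
  List.ofFn (n := p.length - 1) fun j => !(dduB p j.val || dduB p (j.val - 1))

/-- Canonical inverse map. -/
def gMap (q : List Bool) : List Bool :=
  List.ofFn (n := q.length + 1) fun j => !(uddB q (j.val - 1) || uddB q (j.val - 2))

@[simp] lemma fMap_length (p : List Bool) : (fMap p).length = p.length - 1 := by
  simp [fMap]

@[simp] lemma gMap_length (q : List Bool) : (gMap q).length = q.length + 1 := by
  simp [gMap]

lemma fMap_getElem? (p : List Bool) (j : ℕ) :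
    (fMap p)[j]? = if j < p.length - 1 then some (!(dduB p j || dduB p (j - 1))) else none := by
  rw [fMap, List.getElem?_ofFn]
  by_cases h : j < p.length - 1 <;> simp [h]

lemma gMap_getElem? (q : List Bool) (j : ℕ) :
    (gMap q)[j]? = if j < q.length + 1 then some (!(uddB q (j - 1) || uddB q (j - 2))) else none := by
  rw [gMap, List.getElem?_ofFn]
  by_cases h : j < q.length + 1 <;> simp [h]

lemma fMap_entry_false {p : List Bool} {j : ℕ}
    (h : (dduB p j || dduB p (j-1)) = true) : p[j]? = some false := by
  simp only [Bool.or_eq_true] at h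
  rcases h with h | h
  · exact (dduB_elim h).1
  · match j with
    | 0 => exact (dduB_elim h).1
    | s+1 => exact (dduB_elim h).2.1

lemma gMap_entry_false {q : List Bool} {j : ℕ} (hq : IsBallot q)
    (h : (uddB q (j-1) || uddB q (j-2)) = true) : q[j]? = some false := by
  simp only [Bool.or_eq_true] at h
  rcases h with h | h
  · match j with
    | 0 => rw [ballot_udd0 hq] at h; exact absurd h (by simp)
    | s+1 => exact (uddB_elim h).2.1
  · match j with
    | 0 => rw [ballot_udd0 hq] at h; exact absurd h (by simp)
    | 1 => rw [ballot_udd0 hq] at h; exact absurd h (by simp)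
    | s+2 => exact (uddB_elim h).2.2

lemma fMap_ballot {p : List Bool} (hp : IsBallot p) : IsBallot (fMap p) := by
  apply ballot_of_take_le
  intro k hk
  rw [fMap_length] at hk
  have hF : ((fMap p).take k).count false ≤ (p.take k).count false := by
    apply count_le_of_pointwise
    intro j _ hj
    rw [fMap_getElem?] at hj
    split at hj
    · apply fMap_entry_false
      have h2 := Option.some.inj hj
      rwa [Bool.not_eq_false'] at h2
    · exact absurd hj (by simp)
  have hT : (p.take k).count true ≤ ((fMap p).take k).count true := by
    apply count_le_of_pointwise
    intro j hjk hj
    have hjlen : j < p.length - 1 := lt_of_lt_of_le hjk hk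
    rw [fMap_getElem?, if_pos hjlen]
    congr 1
    cases hb : (dduB p j || dduB p (j-1)) with
    | false => rfl
    | true =>
      rw [fMap_entry_false hb] at hj
      exact absurd (Option.some.inj hj) (by simp)
  calc ((fMap p).take k).count false ≤ (p.take k).count false := hF
    _ ≤ (p.take k).count true := hp k
    _ ≤ ((fMap p).take k).count true := hT

lemma gMap_ballot {q : List Bool} (hq : IsBallot q) : IsBallot (gMap q) := by
  intro k
  have hF : ((gMap q).take k).count false ≤ (q.take k).count false := by
    apply count_le_of_pointwise
    intro j _ hj
    rw [gMap_getElem?] at hj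
    split at hj
    · apply gMap_entry_false hq
      have h2 := Option.some.inj hj
      rwa [Bool.not_eq_false'] at h2
    · exact absurd hj (by simp)
  have hT : (q.take k).count true ≤ ((gMap q).take k).count true := by
    apply count_le_of_pointwise
    intro j _ hj
    have hjlen : j < q.length + 1 := Nat.lt_succ_of_lt (lt_of_getElem?_some hj)
    rw [gMap_getElem?, if_pos hjlen]
    congr 1
    cases hb : (uddB q (j-1) || uddB q (j-2)) with
    | false => rfl
    | true =>
      rw [gMap_entry_false hq hb] at hj
      exact absurd (Option.some.inj hj) (by simp)
  calc ((gMap q).take k).count false ≤ (q.take k).count false := hF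
    _ ≤ (q.take k).count true := hq k
    _ ≤ ((gMap q).take k).count true := hT

end DduUddAux

section DduUddMain

lemma uddB_fMap {p : List Bool} (hp : IsBallot p) (t : ℕ) :
    uddB (fMap p) t = dduB p (t+1) := by
  cases hb : dduB p (t+1) with
  | true =>
    obtain ⟨h1, h2, h3⟩ := dduB_elim hb
    have h2' : p[t+2]? = some false := h2
    have h3' : p[t+3]? = some true := h3
    have hlen : t + 3 < p.length := lt_of_getElem?_some h3'
    have hddu_t : dduB p t = false := by
      cases hd : dduB p t with
      | false => rfl
      | true =>
        have h' : p[t+2]? = some true := (dduB_elim hd).2.2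
        exact absurd (h'.symm.trans h2') (by simp)
    have hddu_tm : dduB p (t-1) = false := by
      match t with
      | 0 => exact ballot_ddu0 hp
      | s+1 =>
        show dduB p s = false
        cases hd : dduB p s with
        | false => rfl
        | true =>
          have h' : p[s+2]? = some true := (dduB_elim hd).2.2
          have h1' : p[s+2]? = some false := h1
          exact absurd (h'.symm.trans h1') (by simp)
    apply uddB_intro
    · rw [fMap_getElem?, if_pos (by omega : t < p.length - 1)]
      rw [hddu_t, hddu_tm]
      rfl
    · rw [fMap_getElem?, if_pos (by omega : t+1 < p.length - 1)]
      show some (!(dduB p (t+1) || dduB p t)) = some false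
      rw [hb]
      rfl
    · rw [fMap_getElem?, if_pos (by omega : t+2 < p.length - 1)]
      show some (!(dduB p (t+2) || dduB p (t+1))) = some false
      rw [hb]
      simp
  | false =>
    cases hu : uddB (fMap p) t with
    | false => rfl
    | true =>
      obtain ⟨e0, e1, _⟩ := uddB_elim hu
      have hlen : t + 1 < (fMap p).length := lt_of_getElem?_some e1
      rw [fMap_length] at hlen
      rw [fMap_getElem?, if_pos (by omega)] at e0 e1
      have e0' : (!(dduB p t || dduB p (t-1))) = true := Option.some.inj e0
      have e1' : (!(dduB p (t+1) || dduB p t)) = false := Option.some.inj e1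
      rw [Bool.not_eq_true'] at e0'
      rw [Bool.not_eq_false'] at e1'
      have ht : dduB p t = false := by
        cases h : dduB p t with
        | false => rfl
        | true => rw [h] at e0'; simp at e0'
      have : dduB p (t+1) = true := by
        rw [ht] at e1'; simpa using e1'
      rw [hb] at this
      exact absurd this (by simp)

lemma dduB_gMap_succ {q : List Bool} (hq : IsBallot q) (t : ℕ) :
    dduB (gMap q) (t+1) = uddB q t := by
  cases hb : uddB q t with
  | true =>
    obtain ⟨h0, h1, h2⟩ := uddB_elim hb
    have h1' : q[t+1]? = some false := h1
    have h2' : q[t+2]? = some false := h2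
    have hlen : t + 2 < q.length := lt_of_getElem?_some h2'
    apply dduB_intro
    · rw [gMap_getElem?, if_pos (by omega : t+1 < q.length + 1)]
      show some (!(uddB q t || uddB q (t-1))) = some false
      rw [hb]
      rfl
    · rw [gMap_getElem?, if_pos (by omega : t+1+1 < q.length + 1)]
      show some (!(uddB q (t+1) || uddB q t)) = some false
      rw [hb]
      simp
    · rw [gMap_getElem?, if_pos (by omega : t+1+2 < q.length + 1)]
      show some (!(uddB q (t+2) || uddB q (t+1))) = some true
      have hA : uddB q (t+2) = false := by
        cases h : uddB q (t+2) with
        | false => rfl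
        | true =>
          have h' : q[t+2]? = some true := (uddB_elim h).1
          exact absurd (h'.symm.trans h2') (by simp)
      have hB : uddB q (t+1) = false := by
        cases h : uddB q (t+1) with
        | false => rfl
        | true =>
          have h' : q[t+1]? = some true := (uddB_elim h).1
          exact absurd (h'.symm.trans h1') (by simp)
      rw [hA, hB]
      rfl
  | false =>
    cases hd : dduB (gMap q) (t+1) with
    | false => rfl
    | true =>
      obtain ⟨_, e2, e3⟩ := dduB_elim hd
      have hlen : t + 1 + 2 < (gMap q).length := lt_of_getElem?_some e3
      rw [gMap_length] at hlen
      rw [gMap_getElem?, if_pos (by omega)] at e2 e3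
      have e2' : (!(uddB q (t+1) || uddB q t)) = false := Option.some.inj e2
      have e3' : (!(uddB q (t+2) || uddB q (t+1))) = true := Option.some.inj e3
      rw [Bool.not_eq_false'] at e2'
      rw [Bool.not_eq_true'] at e3'
      have h1 : uddB q (t+1) = false := by
        cases h : uddB q (t+1) with
        | false => rfl
        | true => rw [h] at e3'; simp at e3'
      have h0 : uddB q t = true := by
        rw [h1] at e2'; simpa using e2'
      rw [hb] at h0
      exact absurd h0 (by simp)

lemma dduB_gMap_zero {q : List Bool} (hq : IsBallot q) : dduB (gMap q) 0 = false := by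
  cases hd : dduB (gMap q) 0 with
  | false => rfl
  | true =>
    obtain ⟨e0, _, _⟩ := dduB_elim hd
    rw [gMap_getElem?, if_pos (by omega)] at e0
    have e0' : (!(uddB q 0 || uddB q 0)) = false := Option.some.inj e0
    rw [ballot_udd0 hq] at e0'
    simp at e0'

lemma fMap_congr {p p' : List Bool} (h : PathEquiv [false,false,true] p p') :
    fMap p = fMap p' := by
  have hlen : p.length = p'.length := h.1
  have hddu : ∀ i, dduB p i = dduB p' i := by
    intro i
    have hi := h.2 i
    rw [occursAt_ddu_iff, occursAt_ddu_iff] at hi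
    cases h1 : dduB p i <;> cases h2 : dduB p' i <;> simp_all
  unfold fMap
  simp only [hlen, hddu]
  simp [Fin.coe_cast]

lemma gMap_congr {q q' : List Bool} (h : PathEquiv [true,false,false] q q') :
    gMap q = gMap q' := by
  have hlen : q.length = q'.length := h.1
  have hudd : ∀ i, uddB q i = uddB q' i := by
    intro i
    have hi := h.2 i
    rw [occursAt_udd_iff, occursAt_udd_iff] at hi
    cases h1 : uddB q i <;> cases h2 : uddB q' i <;> simp_all
  unfold gMap
  simp only [hlen, hudd]
  simp [Fin.coe_cast]

lemma gf_equiv {p : List Bool} (hp : IsBallot p) (hlen : 1 ≤ p.length) :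
    PathEquiv [false,false,true] (gMap (fMap p)) p := by
  constructor
  · simp
    omega
  · intro i
    rw [occursAt_ddu_iff, occursAt_ddu_iff]
    match i with
    | 0 => rw [dduB_gMap_zero (fMap_ballot hp), ballot_ddu0 hp]
    | t+1 => rw [dduB_gMap_succ (fMap_ballot hp), uddB_fMap hp]

lemma fg_equiv {q : List Bool} (hq : IsBallot q) :
    PathEquiv [true,false,false] (fMap (gMap q)) q := by
  constructor
  · simp
  · intro t
    rw [occursAt_udd_iff, occursAt_udd_iff, uddB_fMap (gMap_ballot hq),
      dduB_gMap_succ hq]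

end DduUddMain

theorem ddu_udd_classes_shift' (n : ℕ) :
    numBallotClasses [false, false, true] (n + 1) =
      numBallotClasses [true, false, false] n := by
  unfold numBallotClasses
  refine Nat.card_congr ⟨
    Quotient.lift
      (fun p : {p : List Bool // IsBallot p ∧ p.length = n+1} =>
        Quotient.mk (ballotSetoid [true,false,false] n)
          ⟨fMap p.1, fMap_ballot p.2.1, by simp [p.2.2]⟩)
      (fun a b hab => congrArg _ (Subtype.ext (fMap_congr hab))),
    Quotient.lift
      (fun q : {q : List Bool // IsBallot q ∧ q.length = n} =>
        Quotient.mk (ballotSetoid [false,false,true] (n+1))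
          ⟨gMap q.1, gMap_ballot q.2.1, by simp [q.2.2]⟩)
      (fun a b hab => congrArg _ (Subtype.ext (gMap_congr hab))),
    ?_, ?_⟩
  · intro x
    induction x using Quotient.ind with
    | _ p =>
      apply Quotient.sound
      exact gf_equiv p.2.1 (by rw [p.2.2]; omega)
  · intro x
    induction x using Quotient.ind with
    | _ q =>
      apply Quotient.sound
      exact fg_equiv q.2.1


/-- the number of DDU-equivalence classes of ballot paths of length
`n + 1` equals the number of UDD-equivalence classes of ballot paths of length `n`. -/
theorem ddu_udd_classes_shift (n : ℕ) :
    numBallotClasses [false, false, true] (n + 1) =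
      numBallotClasses [true, false, false] n := by
  exact ddu_udd_classes_shift' n
end

section
/- Let C be the (unique) formal power series over ℚ satisfying C = 1 + x·C² (the Catalan generating function), and let C(x²) denote the series obtained from C by substituting x² for x. Let c_n denote the number of UUD-equivalence classes of Dyck paths of semilength n (so c₀ = 1). Then in the ring of formal power series over ℚ, (∑_{n≥0} c_n xⁿ) · (1 − x(1 + x)·C(x²)) = 1. -/
namespace UUDAux

def ht (w : List Bool) : ℤ := (w.map (fun b => if b then (1:ℤ) else -1)).sum

@[simp] lemma ht_nil : ht [] = 0 := rfl
@[simp] lemma ht_cons_true (w : List Bool) : ht (true :: w) = 1 + ht w := by simp [ht]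
@[simp] lemma ht_cons_false (w : List Bool) : ht (false :: w) = -1 + ht w := by simp [ht]

def Ok (h : ℕ) (w : List Bool) : Prop :=
  (∀ k : ℕ, 0 ≤ (h:ℤ) + ht (w.take k)) ∧ (h:ℤ) + ht w = 0

def occ (w : List Bool) : Set ℕ :=
  {i | w[i]? = some true ∧ w[i+1]? = some true ∧ w[i+2]? = some false}

def Sig (h ℓ : ℕ) : Set (Set ℕ) :=
  {S | ∃ w : List Bool, w.length = ℓ ∧ Ok h w ∧ occ w = S}

def sh (d : ℕ) (S : Set ℕ) : Set ℕ := (· + d) '' S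

lemma mem_sh {d x : ℕ} {S : Set ℕ} : x ∈ sh d S ↔ ∃ j ∈ S, j + d = x := by
  simp [sh, Set.mem_image]

@[simp] lemma add_mem_sh {d i : ℕ} {S : Set ℕ} : i + d ∈ sh d S ↔ i ∈ S := by
  rw [mem_sh]
  constructor
  · rintro ⟨j, hj, hje⟩
    have : j = i := by omega
    rwa [this] at hj
  · intro hi; exact ⟨i, hi, rfl⟩

@[simp] lemma sh_empty {d : ℕ} : sh d (∅ : Set ℕ) = ∅ := by simp [sh]

lemma sh_sh {d e : ℕ} {S : Set ℕ} : sh d (sh e S) = sh (e + d) S := by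
  ext x
  simp only [mem_sh]
  constructor
  · rintro ⟨j, hj, rfl⟩
    obtain ⟨i, hi, rfl⟩ := mem_sh.1 hj
    exact ⟨i, hi, by omega⟩
  · rintro ⟨i, hi, rfl⟩
    exact ⟨i + e, mem_sh.2 ⟨i, hi, rfl⟩, by omega⟩

@[simp] lemma zero_mem_sh_succ {d : ℕ} {S : Set ℕ} : (0 : ℕ) ∉ sh (d+1) S := by
  rw [mem_sh]; rintro ⟨j, -, hje⟩; omega

lemma sh_inj {d : ℕ} : Function.Injective (sh d) := by
  intro A B hAB
  ext i
  have : i + d ∈ sh d A ↔ i + d ∈ sh d B := by rw [hAB]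
  simpa using this

lemma mem_occ_succ {b : Bool} {w : List Bool} {i : ℕ} :
    i + 1 ∈ occ (b :: w) ↔ i ∈ occ w := by
  simp [occ]

lemma zero_mem_occ_cons {b : Bool} {w : List Bool} :
    0 ∈ occ (b :: w) ↔ b = true ∧ w[0]? = some true ∧ w[1]? = some false := by
  simp [occ]

lemma mem_occ_le {w : List Bool} {i : ℕ} (hi : i ∈ occ w) : i + 3 ≤ w.length := by
  obtain ⟨hlt, -⟩ := List.getElem?_eq_some_iff.1 hi.2.2
  omega

lemma ht_bound (w : List Bool) : -(w.length : ℤ) ≤ ht w ∧ ht w ≤ w.length := by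
  induction w with
  | nil => simp
  | cons b w ih =>
    cases b <;> simp only [ht_cons_true, ht_cons_false, List.length_cons] <;> push_cast <;> omega

lemma ht_parity (w : List Bool) : ∃ r : ℤ, ht w + w.length = 2 * r := by
  induction w with
  | nil => exact ⟨0, by simp⟩
  | cons b w ih =>
    obtain ⟨r, hr⟩ := ih
    cases b
    · exact ⟨r, by simp only [ht_cons_false, List.length_cons]; push_cast; omega⟩
    · exact ⟨r + 1, by simp only [ht_cons_true, List.length_cons]; push_cast; omega⟩

@[simp] lemma ok_nil {h : ℕ} : Ok h [] ↔ h = 0 := by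
  constructor
  · intro ⟨_, h2⟩; simpa using h2
  · rintro rfl; exact ⟨fun k => by simp, by simp⟩

lemma ok_cons_true {h : ℕ} {w : List Bool} (hw : Ok (h+1) w) : Ok h (true :: w) := by
  constructor
  · intro k
    cases k with
    | zero => simp only [List.take_zero, ht_nil, add_zero]; positivity
    | succ k =>
      rw [List.take_succ_cons, ht_cons_true]
      have := hw.1 k
      push_cast at *; omega
  · rw [ht_cons_true]; have := hw.2; push_cast at *; omega

lemma ok_cons_false {h : ℕ} {w : List Bool} (hw : Ok h w) : Ok (h+1) (false :: w) := by
  constructor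
  · intro k
    cases k with
    | zero => simp only [List.take_zero, ht_nil, add_zero]; positivity
    | succ k =>
      rw [List.take_succ_cons, ht_cons_false]
      have := hw.1 k
      push_cast at *; omega
  · rw [ht_cons_false]; have := hw.2; push_cast at *; omega

lemma ok_tail_true {h : ℕ} {w : List Bool} (hw : Ok h (true :: w)) : Ok (h+1) w := by
  constructor
  · intro k
    have := hw.1 (k+1)
    rw [List.take_succ_cons, ht_cons_true] at this
    push_cast at *; omega
  · have := hw.2; rw [ht_cons_true] at this; push_cast at *; omega

lemma ok_tail_false {h : ℕ} {w : List Bool} (hw : Ok (h+1) (false :: w)) : Ok h w := by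
  constructor
  · intro k
    have := hw.1 (k+1)
    rw [List.take_succ_cons, ht_cons_false] at this
    push_cast at *; omega
  · have := hw.2; rw [ht_cons_false] at this; push_cast at *; omega

lemma ok_cons_false_pos {h : ℕ} {w : List Bool} (hw : Ok h (false :: w)) : 1 ≤ h := by
  have := hw.1 1
  rw [List.take_succ_cons, List.take_zero, ht_cons_false] at this
  simp at this
  omega

lemma sig_sub_lt {h ℓ : ℕ} {S : Set ℕ} (hS : S ∈ Sig h ℓ) : S ⊆ Set.Iio ℓ := by
  obtain ⟨w, hw, -, rfl⟩ := hS
  intro i hi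
  have := mem_occ_le hi
  simp only [Set.mem_Iio]; omega

lemma sig_finite (h ℓ : ℕ) : (Sig h ℓ).Finite := by
  have : Sig h ℓ ⊆ {S | S ⊆ Set.Iio ℓ} := fun S hS => sig_sub_lt hS
  exact Set.Finite.subset (Set.Finite.finite_subsets (Set.finite_Iio ℓ)) this

lemma sig_empty_of_lt {h ℓ : ℕ} (hlt : ℓ < h) : Sig h ℓ = ∅ := by
  ext S
  simp only [Set.mem_empty_iff_false, iff_false]
  rintro ⟨w, hw, hok, -⟩
  have h1 := (ht_bound w).1
  have h2 := hok.2
  rw [hw] at h1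
  omega

lemma sig_mem_le {h ℓ : ℕ} {S : Set ℕ} (hS : S ∈ Sig h ℓ) : h ≤ ℓ := by
  by_contra hc
  rw [sig_empty_of_lt (by omega)] at hS
  exact hS

lemma sig_parity {h ℓ : ℕ} (hp : ¬ 2 ∣ (ℓ + h)) : Sig h ℓ = ∅ := by
  ext S
  simp only [Set.mem_empty_iff_false, iff_false]
  rintro ⟨w, hw, hok, -⟩
  obtain ⟨r, hr⟩ := ht_parity w
  have h2 := hok.2
  rw [hw] at hr
  exact hp ⟨((ℓ + h : ℕ) : ℤ).toNat / 2, by omega⟩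

lemma sig_mem_parity {h ℓ : ℕ} {S : Set ℕ} (hS : S ∈ Sig h ℓ) : 2 ∣ (ℓ + h) := by
  by_contra hc
  rw [sig_parity hc] at hS
  exact hS

lemma sig_zero_zero : Sig 0 0 = {∅} := by
  ext S
  constructor
  · rintro ⟨w, hw, -, rfl⟩
    rw [List.length_eq_zero_iff] at hw
    subst hw
    simp only [Set.mem_singleton_iff]
    ext i; simp [occ]
  · rintro rfl
    exact ⟨[], rfl, by simp, by ext i; simp [occ]⟩

lemma sig_zero_pos {h : ℕ} (hh : h ≠ 0) : Sig h 0 = ∅ := by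
  ext S
  simp only [Set.mem_empty_iff_false, iff_false]
  rintro ⟨w, hw, hok, -⟩
  rw [List.length_eq_zero_iff] at hw
  subst hw
  simp at hok
  omega




lemma occ_cons_false (w : List Bool) : occ (false :: w) = sh 1 (occ w) := by
  ext i
  cases i with
  | zero => simp [occ]
  | succ i => rw [mem_occ_succ, add_mem_sh]

lemma occ_cons_true_of {w : List Bool} (hT : ¬(w[0]? = some true ∧ w[1]? = some false)) :
    occ (true :: w) = sh 1 (occ w) := by
  ext i
  cases i with
  | zero =>
    simp only [zero_mem_occ_cons, zero_mem_sh_succ, iff_false]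
    rintro ⟨-, hc⟩
    exact hT hc
  | succ i => rw [mem_occ_succ, add_mem_sh]

lemma occ_TTF (w : List Bool) : occ (true :: true :: false :: w) = insert 0 (sh 3 (occ w)) := by
  ext i
  rcases i with _ | (_ | (_ | i))
  · simp [occ]
  · rw [mem_occ_succ]
    simp [occ, mem_sh]
  · rw [mem_occ_succ, mem_occ_succ]
    simp [occ, mem_sh]
  · rw [mem_occ_succ, mem_occ_succ, mem_occ_succ]
    have : i + 1 + 1 + 1 = i + 3 := by omega
    rw [this]
    simp only [Set.mem_insert_iff, add_mem_sh]
    constructor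
    · exact fun h => Or.inr h
    · rintro (h | h)
      · omega
      · exact h

lemma sig_block_bwd {h ℓ : ℕ} {S' : Set ℕ} (hS' : S' ∈ Sig (h+1) ℓ) :
    insert 0 (sh 3 S') ∈ Sig h (ℓ+3) := by
  obtain ⟨w', hlen, hok, rfl⟩ := hS'
  refine ⟨true :: true :: false :: w', by simp [hlen], ?_, occ_TTF w'⟩
  exact ok_cons_true (ok_cons_true (ok_cons_false hok))

lemma sig_block_fwd {h ℓ : ℕ} {S : Set ℕ} (hS : S ∈ Sig h (ℓ+3)) (h0 : 0 ∈ S) :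
    ∃ S', S' ∈ Sig (h+1) ℓ ∧ S = insert 0 (sh 3 S') := by
  obtain ⟨w, hlen, hok, rfl⟩ := hS
  rcases w with - | ⟨b0, - | ⟨b1, - | ⟨b2, w'⟩⟩⟩
  · simp at hlen
  · simp at hlen
  · simp at hlen
  · obtain ⟨e0, e1, e2⟩ := h0
    simp only [List.getElem?_cons_zero, List.getElem?_cons_succ, Option.some.injEq] at e0 e1 e2
    subst e0; subst e1; subst e2
    refine ⟨occ w', ⟨w', by simpa using hlen, ?_, rfl⟩, occ_TTF w'⟩
    have h1 := ok_tail_true hok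
    have h2 := ok_tail_true h1
    exact ok_tail_false h2

lemma sig_shift_false {h ℓ : ℕ} {S' : Set ℕ} (hS' : S' ∈ Sig h ℓ) :
    sh 1 S' ∈ Sig (h+1) (ℓ+1) := by
  obtain ⟨w', hlen, hok, rfl⟩ := hS'
  exact ⟨false :: w', by simp [hlen], ok_cons_false hok, occ_cons_false w'⟩

lemma sig_TF_bwd {h ℓ : ℕ} {S' : Set ℕ} (hS' : S' ∈ Sig h ℓ) :
    sh 2 S' ∈ Sig h (ℓ+2) := by
  obtain ⟨w', hlen, hok, rfl⟩ := hS'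
  refine ⟨true :: false :: w', by simp [hlen], ok_cons_true (ok_cons_false hok), ?_⟩
  rw [occ_cons_true_of (by simp), occ_cons_false, sh_sh]

lemma sig_strip {h ℓ : ℕ} {S : Set ℕ} (hS : S ∈ Sig h (ℓ+1)) (h0 : 0 ∉ S) :
    ∃ S', S = sh 1 S' ∧ ((1 ≤ h ∧ S' ∈ Sig (h-1) ℓ) ∨ S' ∈ Sig (h+1) ℓ) := by
  obtain ⟨w, hlen, hok, rfl⟩ := hS
  rcases w with - | ⟨b, w'⟩
  · simp at hlen
  · have hshift : occ (b :: w') = sh 1 (occ w') := by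
      cases b
      · exact occ_cons_false w'
      · refine occ_cons_true_of ?_
        intro hc
        exact h0 (zero_mem_occ_cons.2 ⟨rfl, hc⟩)
    refine ⟨occ w', hshift, ?_⟩
    cases b
    · have hpos := ok_cons_false_pos hok
      left
      refine ⟨hpos, ⟨w', by simpa using hlen, ?_, rfl⟩⟩
      obtain ⟨h', rfl⟩ : ∃ h', h = h' + 1 := ⟨h - 1, by omega⟩
      simpa using ok_tail_false hok
    · exact Or.inr ⟨w', by simpa using hlen, ok_tail_true hok, rfl⟩

lemma empty_mem_sig {h ℓ : ℕ} (hle : h ≤ ℓ) (hpar : 2 ∣ (ℓ + h)) : (∅ : Set ℕ) ∈ Sig h ℓ := by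
  induction ℓ using Nat.strong_induction_on generalizing h with
  | _ ℓ IH =>
  rcases h with - | h'
  · rcases ℓ with - | (- | ℓ')
    · rw [sig_zero_zero]; rfl
    · omega
    · have h2 : (∅ : Set ℕ) ∈ Sig 0 ℓ' := IH ℓ' (by omega) (by omega) (by omega)
      simpa using sig_TF_bwd h2
  · obtain ⟨ℓ', rfl⟩ : ∃ ℓ', ℓ = ℓ' + 1 := ⟨ℓ - 1, by omega⟩
    have h2 : (∅ : Set ℕ) ∈ Sig h' ℓ' := IH ℓ' (by omega) (by omega) (by omega)
    simpa using sig_shift_false h2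

lemma sig_low : ∀ ℓ h : ℕ, ∀ S : Set ℕ, S ∈ Sig (h+2) ℓ → S ∈ Sig h ℓ := by
  intro ℓ
  induction ℓ using Nat.strong_induction_on with
  | _ ℓ IH =>
  intro h S hS
  by_cases hemp : S = ∅
  · subst hemp
    have h1 := sig_mem_le hS
    have h2 := sig_mem_parity hS
    exact empty_mem_sig (by omega) (by omega)
  by_cases h0 : 0 ∈ S
  · have h3 : 3 ≤ ℓ := by
      obtain ⟨w, hlen, -, rfl⟩ := hS
      have := mem_occ_le h0
      omega
    obtain ⟨ℓ', rfl⟩ : ∃ ℓ', ℓ = ℓ' + 3 := ⟨ℓ - 3, by omega⟩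
    obtain ⟨S', hS', rfl⟩ := sig_block_fwd hS h0
    exact sig_block_bwd (IH ℓ' (by omega) (h+1) S' hS')
  · have h1 : 1 ≤ ℓ := by
      rcases Nat.eq_zero_or_pos ℓ with rfl | h
      · by_cases hz : h + 2 = 0
        · omega
        · rw [sig_zero_pos hz] at hS; exact absurd hS (by simp)
      · omega
    obtain ⟨ℓ', rfl⟩ : ∃ ℓ', ℓ = ℓ' + 1 := ⟨ℓ - 1, by omega⟩
    obtain ⟨S', rfl, hcase⟩ := sig_strip hS h0
    have hS1 : S' ∈ Sig (h+1) ℓ' := by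
      rcases hcase with ⟨-, hc⟩ | hc
      · simpa using hc
      · exact IH ℓ' (by omega) (h+1) S' hc
    rcases h with - | h'
    · -- h = 0 : PREP argument
      by_cases h0' : 0 ∈ S'
      · -- witness starts with T,T
        obtain ⟨w', hlen, hok, rfl⟩ := hS1
        obtain ⟨e0, e1, -⟩ := h0'
        refine ⟨true :: w', by simp [hlen], ok_cons_true hok, ?_⟩
        rw [occ_cons_true_of (by rw [e1]; simp)]
      · have hne' : S' ≠ ∅ := by
          intro hc
          rw [hc] at hemp
          simp at hemp
        have h1' : 1 ≤ ℓ' := by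
          rcases Nat.eq_zero_or_pos ℓ' with rfl | h
          · rw [sig_zero_pos (by omega)] at hS1; exact absurd hS1 (by simp)
          · omega
        obtain ⟨ℓ'', rfl⟩ : ∃ m, ℓ' = m + 1 := ⟨ℓ' - 1, by omega⟩
        obtain ⟨S'', rfl, hc2⟩ := sig_strip hS1 h0'
        have hS0 : S'' ∈ Sig 0 ℓ'' := by
          rcases hc2 with ⟨-, hc⟩ | hc
          · simpa using hc
          · exact IH ℓ'' (by omega) 0 S'' hc
        rw [sh_sh]
        have := sig_TF_bwd hS0
        exact this
    · -- h = h' + 1 : lower S' then prepend false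
      have hS2 : S' ∈ Sig h' ℓ' := IH ℓ' (by omega) h' S' (by simpa using hS1)
      simpa using sig_shift_false hS2


lemma sig_prepT {ℓ : ℕ} {S' : Set ℕ} (hS' : S' ∈ Sig 1 ℓ) : sh 1 S' ∈ Sig 0 (ℓ+1) := by
  by_cases h0' : 0 ∈ S'
  · obtain ⟨w', hlen, hok, rfl⟩ := hS'
    obtain ⟨e0, e1, -⟩ := h0'
    refine ⟨true :: w', by simp [hlen], ok_cons_true hok, ?_⟩
    rw [occ_cons_true_of (by rw [e1]; simp)]
  · by_cases hemp : S' = ∅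
    · subst hemp
      have h1 := sig_mem_le hS'
      have h2 := sig_mem_parity hS'
      rw [sh_empty]
      exact empty_mem_sig (by omega) (by omega)
    · have h1' : 1 ≤ ℓ := sig_mem_le hS'
      obtain ⟨ℓ'', rfl⟩ : ∃ m, ℓ = m + 1 := ⟨ℓ - 1, by omega⟩
      obtain ⟨S'', rfl, hc2⟩ := sig_strip hS' h0'
      have hS0 : S'' ∈ Sig 0 ℓ'' := by
        rcases hc2 with ⟨-, hc⟩ | hc
        · simpa using hc
        · exact sig_low ℓ'' 0 S'' hc
      rw [sh_sh]
      exact sig_TF_bwd hS0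

lemma sig_split_zero_mem {H ℓ : ℕ} (h3 : 3 ≤ ℓ) :
    {S | S ∈ Sig H ℓ ∧ 0 ∈ S} = (fun S' => insert 0 (sh 3 S')) '' Sig (H+1) (ℓ-3) := by
  obtain ⟨ℓ', rfl⟩ : ∃ m, ℓ = m + 3 := ⟨ℓ - 3, by omega⟩
  have hsub : ℓ' + 3 - 3 = ℓ' := by omega
  rw [hsub]
  ext S
  constructor
  · rintro ⟨hS, h0⟩
    obtain ⟨S', hS', rfl⟩ := sig_block_fwd hS h0
    exact ⟨S', hS', rfl⟩
  · rintro ⟨S', hS', rfl⟩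
    exact ⟨sig_block_bwd hS', by simp⟩

lemma sig_split_zero_mem_small {H ℓ : ℕ} (h3 : ℓ < 3) :
    {S | S ∈ Sig H ℓ ∧ 0 ∈ S} = ∅ := by
  ext S
  simp only [Set.mem_empty_iff_false, iff_false, Set.mem_setOf_eq, not_and]
  rintro ⟨w, hlen, -, rfl⟩ h0
  have := mem_occ_le h0
  omega

lemma sig_split_not_mem_pos {H ℓ : ℕ} :
    {S | S ∈ Sig (H+1) (ℓ+1) ∧ 0 ∉ S} = sh 1 '' Sig H ℓ := by
  ext S
  constructor
  · rintro ⟨hS, h0⟩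
    obtain ⟨S', rfl, hc⟩ := sig_strip hS h0
    refine ⟨S', ?_, rfl⟩
    rcases hc with ⟨-, hc⟩ | hc
    · simpa using hc
    · exact sig_low ℓ H S' (by simpa using hc)
  · rintro ⟨S', hS', rfl⟩
    exact ⟨sig_shift_false hS', by simpa using (zero_mem_sh_succ (d := 0) (S := S'))⟩

lemma sig_split_not_mem_zero {ℓ : ℕ} :
    {S | S ∈ Sig 0 (ℓ+1) ∧ 0 ∉ S} = sh 1 '' Sig 1 ℓ := by
  ext S
  constructor
  · rintro ⟨hS, h0⟩
    obtain ⟨S', rfl, hc⟩ := sig_strip hS h0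
    refine ⟨S', ?_, rfl⟩
    rcases hc with ⟨hc, -⟩ | hc
    · omega
    · exact hc
  · rintro ⟨S', hS', rfl⟩
    exact ⟨sig_prepT hS', by simpa using (zero_mem_sh_succ (d := 0) (S := S'))⟩

noncomputable def nn (h ℓ : ℕ) : ℕ := (Sig h ℓ).ncard

lemma insert_sh3_inj : Function.Injective (fun S' : Set ℕ => insert 0 (sh 3 S')) := by
  intro A B hAB
  have hAB' : insert 0 (sh 3 A) = insert 0 (sh 3 B) := hAB
  ext i
  have : i + 3 ∈ insert 0 (sh 3 A) ↔ i + 3 ∈ insert 0 (sh 3 B) := by rw [hAB']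
  simpa using this

lemma nn_split (H L : ℕ) :
    nn H L = {S | S ∈ Sig H L ∧ 0 ∈ S}.ncard + {S | S ∈ Sig H L ∧ 0 ∉ S}.ncard := by
  have hfin := sig_finite H L
  have hun : Sig H L = {S | S ∈ Sig H L ∧ 0 ∈ S} ∪ {S | S ∈ Sig H L ∧ 0 ∉ S} := by
    ext S
    by_cases h0 : 0 ∈ S <;> simp [h0]
  have hdis : Disjoint {S | S ∈ Sig H L ∧ 0 ∈ S} {S | S ∈ Sig H L ∧ 0 ∉ S} := by
    rw [Set.disjoint_left]
    rintro S ⟨-, h0⟩ ⟨-, h0'⟩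
    exact h0' h0
  rw [nn]
  conv_lhs => rw [hun]
  exact Set.ncard_union_eq hdis (hfin.subset (by intro S hS; exact hS.1))
    (hfin.subset (by intro S hS; exact hS.1))

lemma ncard_zero_mem_part (H L : ℕ) :
    {S | S ∈ Sig H L ∧ 0 ∈ S}.ncard = if 3 ≤ L then nn (H+1) (L-3) else 0 := by
  by_cases h3 : 3 ≤ L
  · rw [if_pos h3, sig_split_zero_mem h3, Set.ncard_image_of_injective _ insert_sh3_inj, nn]
  · rw [if_neg h3, sig_split_zero_mem_small (by omega), Set.ncard_empty]

lemma nn_rec_pos (h ℓ : ℕ) :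
    nn (h+1) (ℓ+1) = nn h ℓ + (if 2 ≤ ℓ then nn (h+2) (ℓ-2) else 0) := by
  rw [nn_split, ncard_zero_mem_part, sig_split_not_mem_pos,
    Set.ncard_image_of_injective _ sh_inj]
  have : (if 3 ≤ ℓ + 1 then nn (h+1+1) (ℓ+1-3) else 0) = (if 2 ≤ ℓ then nn (h+2) (ℓ-2) else 0) := by
    by_cases h2 : 2 ≤ ℓ
    · rw [if_pos (by omega : 3 ≤ ℓ + 1), if_pos h2, show ℓ + 1 - 3 = ℓ - 2 from by omega]
    · rw [if_neg (by omega), if_neg h2]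
  rw [this]
  simp only [nn]
  omega

lemma nn_rec_zero (ℓ : ℕ) :
    nn 0 (ℓ+1) = nn 1 ℓ + (if 2 ≤ ℓ then nn 1 (ℓ-2) else 0) := by
  rw [nn_split, ncard_zero_mem_part, sig_split_not_mem_zero,
    Set.ncard_image_of_injective _ sh_inj]
  have : (if 3 ≤ ℓ + 1 then nn (0+1) (ℓ+1-3) else 0) = (if 2 ≤ ℓ then nn 1 (ℓ-2) else 0) := by
    by_cases h2 : 2 ≤ ℓ
    · rw [if_pos (by omega : 3 ≤ ℓ + 1), if_pos h2, show ℓ + 1 - 3 = ℓ - 2 from by omega]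
    · rw [if_neg (by omega), if_neg h2]
  rw [this]
  simp only [nn]
  omega

@[simp] lemma nn_zero_zero : nn 0 0 = 1 := by rw [nn, sig_zero_zero, Set.ncard_singleton]

lemma nn_zero_pos {h : ℕ} (hh : h ≠ 0) : nn h 0 = 0 := by
  rw [nn, sig_zero_pos hh, Set.ncard_empty]

lemma nn_of_lt {h ℓ : ℕ} (hlt : ℓ < h) : nn h ℓ = 0 := by
  rw [nn, sig_empty_of_lt hlt, Set.ncard_empty]

lemma nn_parity {h ℓ : ℕ} (hp : ¬ 2 ∣ (ℓ + h)) : nn h ℓ = 0 := by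
  rw [nn, sig_parity hp, Set.ncard_empty]


lemma ht_eq_counts (w : List Bool) : ht w = (w.count true : ℤ) - (w.count false : ℤ) := by
  induction w with
  | nil => simp
  | cons b w ih =>
    cases b
    · rw [ht_cons_false, ih]
      simp [List.count_cons]
      push_cast
      ring
    · rw [ht_cons_true, ih]
      simp [List.count_cons]
      push_cast
      ring

lemma isDyck_iff_ok {p : List Bool} : IsDyck p ↔ Ok 0 p := by
  constructor
  · rintro ⟨hb, hc⟩
    constructor
    · intro k
      have := hb k
      rw [ht_eq_counts]
      push_cast
      omega
    · rw [ht_eq_counts]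
      push_cast
      omega
  · rintro ⟨h1, h2⟩
    constructor
    · intro k
      have := h1 k
      rw [ht_eq_counts] at this
      push_cast at this
      omega
    · have := h2
      rw [ht_eq_counts] at this
      push_cast at this
      omega

lemma take3_eq_iff (l : List Bool) :
    l.take 3 = [true, true, false] ↔
      (l[0]? = some true ∧ l[1]? = some true ∧ l[2]? = some false) := by
  match l with
  | [] => simp
  | [a] => simp
  | [a, b] => simp
  | a :: b :: c :: rest =>
    show a :: b :: c :: List.take 0 rest = _ ↔ _
    simp [List.take_zero]

lemma occursAt_iff {p : List Bool} {i : ℕ} :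
    OccursAt [true, true, false] p i ↔ i ∈ occ p := by
  rw [OccursAt]
  show (p.drop i).take 3 = [true, true, false] ↔ _
  rw [take3_eq_iff]
  simp only [occ, Set.mem_setOf_eq, List.getElem?_drop, Nat.add_zero]

lemma numDyck_eq_nn (n : ℕ) : numDyckClasses [true, true, false] n = nn 0 (2 * n) := by
  classical
  set f : {p : List Bool // IsDyck p ∧ p.length = 2 * n} → Set ℕ := fun p => occ p.1 with hf
  have hker : ∀ p q, (dyckSetoid [true, true, false] n).r p q ↔ (Setoid.ker f).r p q := by
    intro p q
    constructor
    · rintro ⟨-, hocc⟩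
      show occ p.1 = occ q.1
      ext i
      rw [← occursAt_iff, ← occursAt_iff]
      exact hocc i
    · intro hpq
      refine ⟨p.2.2.trans q.2.2.symm, fun i => ?_⟩
      rw [occursAt_iff, occursAt_iff]
      show i ∈ f p ↔ i ∈ f q
      rw [hpq]
  have e1 : Quotient (dyckSetoid [true, true, false] n) ≃ Quotient (Setoid.ker f) :=
    Quotient.congrRight hker
  have e2 : Quotient (Setoid.ker f) ≃ Set.range f := Setoid.quotientKerEquivRange f
  have hrange : Set.range f = Sig 0 (2 * n) := by
    ext S
    constructor
    · rintro ⟨⟨p, hp, hplen⟩, rfl⟩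
      exact ⟨p, hplen, isDyck_iff_ok.1 hp, rfl⟩
    · rintro ⟨w, hlen, hok, rfl⟩
      exact ⟨⟨w, isDyck_iff_ok.2 hok, hlen⟩, rfl⟩
  rw [numDyckClasses, Nat.card_congr (e1.trans e2)]
  rw [Nat.card_coe_set_eq, hrange, nn]


open PowerSeries

noncomputable def NS (h : ℕ) : PowerSeries ℚ := PowerSeries.mk fun ℓ => (nn h ℓ : ℚ)

@[simp] lemma coeff_NS (h ℓ : ℕ) : coeff ℓ (NS h) = (nn h ℓ : ℚ) := coeff_mk ℓ _

lemma NS_rec (h : ℕ) : NS (h+1) = X * NS h + X^3 * NS (h+2) := by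
  ext ℓ
  rw [map_add, show (X : PowerSeries ℚ) * NS h = X^1 * NS h from by ring,
    coeff_X_pow_mul', coeff_X_pow_mul', coeff_NS]
  cases ℓ with
  | zero =>
    rw [nn_zero_pos (Nat.succ_ne_zero h), if_neg (by omega : ¬(1:ℕ) ≤ 0),
      if_neg (by omega : ¬(3:ℕ) ≤ 0)]
    simp
  | succ ℓ =>
    rw [if_pos (by omega : 1 ≤ ℓ + 1), Nat.add_sub_cancel, nn_rec_pos, coeff_NS]
    by_cases h3 : 3 ≤ ℓ + 1
    · rw [if_pos h3, coeff_NS, if_pos (by omega : 2 ≤ ℓ),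
        show ℓ + 1 - 3 = ℓ - 2 from by omega]
      push_cast
      ring
    · rw [if_neg h3, if_neg (by omega : ¬ 2 ≤ ℓ)]
      push_cast
      ring

lemma NS0_rec : NS 0 = 1 + (X + X^3) * NS 1 := by
  ext ℓ
  rw [map_add, add_mul, map_add, show (X : PowerSeries ℚ) * NS 1 = X^1 * NS 1 from by ring,
    coeff_X_pow_mul', coeff_X_pow_mul', coeff_NS, PowerSeries.coeff_one]
  cases ℓ with
  | zero =>
    rw [if_neg (by omega : ¬(1:ℕ) ≤ 0), if_neg (by omega : ¬(3:ℕ) ≤ 0),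
      if_pos (rfl : (0:ℕ) = 0)]
    simp
  | succ ℓ =>
    rw [if_pos (by omega : 1 ≤ ℓ + 1), Nat.add_sub_cancel, nn_rec_zero, coeff_NS,
      if_neg (Nat.succ_ne_zero ℓ)]
    by_cases h3 : 3 ≤ ℓ + 1
    · rw [if_pos h3, coeff_NS, if_pos (by omega : 2 ≤ ℓ),
        show ℓ + 1 - 3 = ℓ - 2 from by omega]
      push_cast
      ring
    · rw [if_neg h3, if_neg (by omega : ¬ 2 ≤ ℓ)]
      push_cast
      ring

lemma coeff_mul_support {d : ℕ} (hd : 0 < d) (P Q : PowerSeries ℚ)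
    (hP : ∀ m, ¬ d ∣ m → coeff m P = 0) (hQ : ∀ m, ¬ d ∣ m → coeff m Q = 0) (n : ℕ) :
    coeff (d*n) (P*Q) =
      ∑ ij ∈ Finset.HasAntidiagonal.antidiagonal n, coeff (d*ij.1) P * coeff (d*ij.2) Q := by
  classical
  rw [PowerSeries.coeff_mul]
  have himg : ∑ ij ∈ (Finset.HasAntidiagonal.antidiagonal n).image (fun p : ℕ × ℕ => (d*p.1, d*p.2)),
        coeff ij.1 P * coeff ij.2 Q
      = ∑ ij ∈ Finset.HasAntidiagonal.antidiagonal n, coeff (d*ij.1) P * coeff (d*ij.2) Q := by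
    refine Finset.sum_image ?_
    rintro ⟨a, b⟩ - ⟨c, e⟩ - hab
    simp only [Prod.mk.injEq] at hab
    exact Prod.ext (Nat.eq_of_mul_eq_mul_left hd hab.1) (Nat.eq_of_mul_eq_mul_left hd hab.2)
  rw [← himg]
  refine (Finset.sum_subset ?_ ?_).symm
  · rintro ⟨a, b⟩ hab
    simp only [Finset.mem_image, Finset.HasAntidiagonal.mem_antidiagonal, Prod.mk.injEq] at hab ⊢
    obtain ⟨⟨i, j⟩, hij, rfl, rfl⟩ := hab
    rw [← Nat.left_distrib, hij]
  · rintro ⟨a, b⟩ hab hni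
    simp only [Finset.HasAntidiagonal.mem_antidiagonal] at hab
    by_cases hda : d ∣ a
    · by_cases hdb : d ∣ b
      · exfalso
        apply hni
        simp only [Finset.mem_image, Finset.HasAntidiagonal.mem_antidiagonal, Prod.mk.injEq]
        obtain ⟨i, rfl⟩ := hda
        obtain ⟨j, rfl⟩ := hdb
        refine ⟨(i, j), Nat.eq_of_mul_eq_mul_left hd ?_, rfl, rfl⟩
        rw [Nat.left_distrib]
        exact hab
      · rw [hQ b hdb, mul_zero]
    · rw [hP a hda, zero_mul]

lemma coeff_mul_support_zero {d : ℕ} (P Q : PowerSeries ℚ)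
    (hP : ∀ m, ¬ d ∣ m → coeff m P = 0) (hQ : ∀ m, ¬ d ∣ m → coeff m Q = 0)
    {m : ℕ} (hm : ¬ d ∣ m) : coeff m (P*Q) = 0 := by
  rw [PowerSeries.coeff_mul]
  refine Finset.sum_eq_zero ?_
  rintro ⟨a, b⟩ hab
  simp only [Finset.HasAntidiagonal.mem_antidiagonal] at hab
  by_cases hda : d ∣ a
  · have hdb : ¬ d ∣ b := fun hdb => hm (hab ▸ dvd_add hda hdb)
    rw [hQ b hdb, mul_zero]
  · rw [hP a hda, zero_mul]


noncomputable def CQ (C : PowerSeries ℚ) : PowerSeries ℚ :=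
  PowerSeries.mk fun ℓ => if 4 ∣ ℓ then coeff (ℓ/4) C else 0

lemma CQ_supp (C : PowerSeries ℚ) (m : ℕ) (hm : ¬ 4 ∣ m) : coeff m (CQ C) = 0 := by
  simp [CQ, hm]

lemma coeff_C_zero (C : PowerSeries ℚ) (hC : C = 1 + X * C^2) : coeff 0 C = 1 := by
  conv_lhs => rw [hC]
  rw [map_add, PowerSeries.coeff_one, show (X : PowerSeries ℚ) * C^2 = X^1 * C^2 from by ring,
    coeff_X_pow_mul', if_neg (by omega : ¬(1:ℕ) ≤ 0), if_pos rfl]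
  norm_num

lemma coeff_C_succ (C : PowerSeries ℚ) (hC : C = 1 + X * C^2) (m : ℕ) :
    coeff (m+1) C = ∑ ij ∈ Finset.HasAntidiagonal.antidiagonal m, coeff ij.1 C * coeff ij.2 C := by
  conv_lhs => rw [hC]
  rw [map_add, PowerSeries.coeff_one, if_neg (Nat.succ_ne_zero m),
    show (X : PowerSeries ℚ) * C^2 = X^1 * C^2 from by ring,
    coeff_X_pow_mul', if_pos (by omega : 1 ≤ m + 1), Nat.add_sub_cancel, sq,
    PowerSeries.coeff_mul]
  ring

lemma coeff_CQ_four (C : PowerSeries ℚ) (j : ℕ) : coeff (4*j) (CQ C) = coeff j C := by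
  simp only [CQ, coeff_mk, if_pos (Dvd.intro j rfl),
    Nat.mul_div_cancel_left j (by norm_num : 0 < 4)]

lemma CQ_eq (C : PowerSeries ℚ) (hC : C = 1 + X * C^2) : CQ C = 1 + X^4 * (CQ C)^2 := by
  ext ℓ
  rw [map_add, PowerSeries.coeff_one, coeff_X_pow_mul']
  by_cases h4 : 4 ∣ ℓ
  · obtain ⟨m, rfl⟩ := h4
    cases m with
    | zero =>
      rw [if_neg (by omega : ¬ 4 ≤ 4*0), coeff_CQ_four C 0, coeff_C_zero C hC]
      norm_num
    | succ m =>
      rw [if_neg (by omega : ¬ 4*(m+1) = 0), if_pos (by omega : 4 ≤ 4*(m+1)),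
        show 4*(m+1) - 4 = 4*m from by omega, coeff_CQ_four, sq,
        coeff_mul_support (by norm_num : 0 < 4) _ _ (CQ_supp C) (CQ_supp C) m,
        coeff_C_succ C hC m]
      rw [zero_add]
      refine Finset.sum_congr rfl ?_
      rintro ⟨i, j⟩ -
      rw [coeff_CQ_four, coeff_CQ_four]
  · rw [CQ_supp C ℓ h4, if_neg (by rintro rfl; exact h4 ⟨0, rfl⟩)]
    by_cases hle : 4 ≤ ℓ
    · rw [if_pos hle, sq, coeff_mul_support_zero _ _ (CQ_supp C) (CQ_supp C)
        (by intro hc; exact h4 (by omega))]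
      ring
    · rw [if_neg hle]
      ring

lemma hrecM (C : PowerSeries ℚ) (hC : C = 1 + X * C^2) (h : ℕ) :
    X * (X^h * ((CQ C)^h * NS 0)) + X^3 * (X^(h+2) * ((CQ C)^(h+2) * NS 0))
      = X^(h+1) * ((CQ C)^(h+1) * NS 0) := by
  have h4 := CQ_eq C hC
  linear_combination (-(X^(h+1) * (CQ C)^h * NS 0)) * h4

lemma NS_eq_M (C : PowerSeries ℚ) (hC : C = 1 + X * C^2) (h : ℕ) :
    NS h = X^h * ((CQ C)^h * NS 0) := by
  have key : ∀ k h ℓ, ℓ < h + 2*k → coeff ℓ (NS h - X^h * ((CQ C)^h * NS 0)) = 0 := by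
    intro k
    induction k with
    | zero =>
      intro h ℓ hℓ
      rw [map_sub, coeff_NS, nn_of_lt (by omega), coeff_X_pow_mul', if_neg (by omega : ¬ h ≤ ℓ)]
      simp
    | succ k IHk =>
      intro h
      induction h with
      | zero =>
        intro ℓ hℓ
        simp
      | succ h IHh =>
        intro ℓ hℓ
        have heq : NS (h+1) - X^(h+1) * ((CQ C)^(h+1) * NS 0)
            = X^1 * (NS h - X^h * ((CQ C)^h * NS 0))
              + X^3 * (NS (h+2) - X^(h+2) * ((CQ C)^(h+2) * NS 0)) := by
          linear_combination (NS_rec h) + (hrecM C hC h)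
        rw [heq, map_add, coeff_X_pow_mul', coeff_X_pow_mul']
        have e1 : (if 1 ≤ ℓ then coeff (ℓ-1) (NS h - X^h * ((CQ C)^h * NS 0)) else 0) = 0 := by
          by_cases h1 : 1 ≤ ℓ
          · rw [if_pos h1, IHh (ℓ-1) (by omega)]
          · rw [if_neg h1]
        have e3 : (if 3 ≤ ℓ then
            coeff (ℓ-3) (NS (h+2) - X^(h+2) * ((CQ C)^(h+2) * NS 0)) else 0) = 0 := by
          by_cases h3 : 3 ≤ ℓ
          · rw [if_pos h3, IHk (h+2) (ℓ-3) (by omega)]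
          · rw [if_neg h3]
        rw [e1, e3, add_zero]
  ext ℓ
  have h2 := key (ℓ+1) h ℓ (by omega)
  rw [map_sub, sub_eq_zero] at h2
  exact h2

lemma Yident (C : PowerSeries ℚ) (hC : C = 1 + X * C^2) :
    NS 0 * (1 - (X^2 + X^4) * CQ C) = 1 := by
  have h1 : NS 1 = X^1 * ((CQ C)^1 * NS 0) := NS_eq_M C hC 1
  have h0 := NS0_rec
  linear_combination h0 + (X + X^3) * h1

end UUDAux

open PowerSeries in
/-- the generating function of the numbers of UUD-equivalence classes of
Dyck paths satisfies `F (1 - x(1+x) C(x^2)) = 1`, where `C` is the Catalan generating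
function and `N = C(x^2)` its substitution at `x^2`. -/
theorem uud_dyck_classes_gf (C N : PowerSeries ℚ)
    (hC : C = 1 + X * C ^ 2)
    (hN : ∀ n : ℕ, (coeff n) N = if 2 ∣ n then (coeff (n / 2)) C else 0) :
    (PowerSeries.mk fun n => (numDyckClasses [true, true, false] n : ℚ)) *
      (1 - X * (1 + X) * N) = 1 := by
  classical
  have hC' : C = 1 + X * C^2 := hC
  have hFeq : (PowerSeries.mk fun n => (numDyckClasses [true, true, false] n : ℚ))
      = PowerSeries.mk fun n => (UUDAux.nn 0 (2*n) : ℚ) := by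
    ext m
    rw [coeff_mk, coeff_mk, UUDAux.numDyck_eq_nn]
  rw [hFeq]
  have hY := UUDAux.Yident C hC'
  have hPsupp : ∀ m, ¬ 2 ∣ m → coeff m (UUDAux.NS 0) = 0 := by
    intro m hm
    rw [UUDAux.coeff_NS, UUDAux.nn_parity (by simpa using hm)]
    norm_num
  have hCQ2 : ∀ j, coeff (2*j) (UUDAux.CQ C) = coeff j N := by
    intro j
    rw [hN j]
    by_cases h2 : 2 ∣ j
    · obtain ⟨i, rfl⟩ := h2
      rw [show 2*(2*i) = 4*i from by ring, UUDAux.coeff_CQ_four, if_pos ⟨i, rfl⟩,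
        Nat.mul_div_cancel_left i (by norm_num : 0 < 2)]
    · rw [UUDAux.CQ_supp C _ (by rintro ⟨i, hi⟩; exact h2 ⟨i, by omega⟩), if_neg h2]
  have hTsupp : ∀ m, ¬ 2 ∣ m → coeff m (1 - (X^2 + X^4) * UUDAux.CQ C) = 0 := by
    intro m hm
    rw [map_sub, PowerSeries.coeff_one, if_neg (by rintro rfl; exact hm ⟨0, rfl⟩),
      show ((X:PowerSeries ℚ)^2 + X^4) * UUDAux.CQ C
        = X^2 * UUDAux.CQ C + X^4 * UUDAux.CQ C from by ring,
      map_add, coeff_X_pow_mul', coeff_X_pow_mul']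
    have e2 : (if 2 ≤ m then coeff (m-2) (UUDAux.CQ C) else 0) = 0 := by
      by_cases h2 : 2 ≤ m
      · rw [if_pos h2, UUDAux.CQ_supp C _ (by rintro ⟨i, hi⟩; exact hm ⟨2*i+1, by omega⟩)]
      · rw [if_neg h2]
    have e4 : (if 4 ≤ m then coeff (m-4) (UUDAux.CQ C) else 0) = 0 := by
      by_cases h4 : 4 ≤ m
      · rw [if_pos h4, UUDAux.CQ_supp C _ (by rintro ⟨i, hi⟩; exact hm ⟨2*i+2, by omega⟩)]
      · rw [if_neg h4]
    rw [e2, e4]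
    ring
  have hT : ∀ b, coeff b (1 - X*(1+X)*N) = coeff (2*b) (1 - (X^2 + X^4) * UUDAux.CQ C) := by
    intro b
    rw [map_sub, map_sub, PowerSeries.coeff_one, PowerSeries.coeff_one,
      show (X:PowerSeries ℚ)*(1+X)*N = X^1*N + X^2*N from by ring,
      show ((X:PowerSeries ℚ)^2 + X^4) * UUDAux.CQ C
        = X^2 * UUDAux.CQ C + X^4 * UUDAux.CQ C from by ring,
      map_add, map_add, coeff_X_pow_mul', coeff_X_pow_mul', coeff_X_pow_mul', coeff_X_pow_mul']
    have eif : (if b = 0 then (1:ℚ) else 0) = (if 2*b = 0 then (1:ℚ) else 0) := by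
      rcases Nat.eq_zero_or_pos b with rfl | hb
      · norm_num
      · rw [if_neg (by omega), if_neg (by omega)]
    have e1 : (if 1 ≤ b then coeff (b-1) N else 0)
        = (if 2 ≤ 2*b then coeff (2*b-2) (UUDAux.CQ C) else 0) := by
      by_cases h1 : 1 ≤ b
      · rw [if_pos h1, if_pos (by omega : 2 ≤ 2*b), show 2*b - 2 = 2*(b-1) from by omega, hCQ2]
      · rw [if_neg h1, if_neg (by omega : ¬ 2 ≤ 2*b)]
    have e2 : (if 2 ≤ b then coeff (b-2) N else 0)
        = (if 4 ≤ 2*b then coeff (2*b-4) (UUDAux.CQ C) else 0) := by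
      by_cases h2 : 2 ≤ b
      · rw [if_pos h2, if_pos (by omega : 4 ≤ 2*b), show 2*b - 4 = 2*(b-2) from by omega, hCQ2]
      · rw [if_neg h2, if_neg (by omega : ¬ 4 ≤ 2*b)]
    rw [eif, e1, e2]
  ext n
  rw [PowerSeries.coeff_mul]
  have hterm : ∀ ij ∈ Finset.HasAntidiagonal.antidiagonal n,
      coeff ij.1 (PowerSeries.mk fun n => (UUDAux.nn 0 (2*n) : ℚ))
          * coeff ij.2 (1 - X*(1+X)*N)
        = coeff (2*ij.1) (UUDAux.NS 0) * coeff (2*ij.2) (1 - (X^2 + X^4) * UUDAux.CQ C) := by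
    rintro ⟨i, j⟩ -
    rw [coeff_mk, UUDAux.coeff_NS, hT j]
  rw [Finset.sum_congr rfl hterm,
    ← UUDAux.coeff_mul_support (by norm_num : 0 < 2) _ _ hPsupp hTsupp n, hY]
  rw [PowerSeries.coeff_one, PowerSeries.coeff_one]
  rcases Nat.eq_zero_or_pos n with rfl | hn
  · norm_num
  · rw [if_neg (by omega), if_neg (by omega)]
end

section
/- For every integer n ≥ 0, the number of DUU-equivalence classes of Dyck paths of semilength n + 1 equals the number of UUD-equivalence classes of Dyck paths of semilength n. -/
namespace DyckAux

/-- letters of `v` at positions `i, i+1, i+2` are `a, b, c`. -/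
def Trip (a b c : Bool) (v : List Bool) (i : ℕ) : Prop :=
  v[i]? = some a ∧ v[i+1]? = some b ∧ v[i+2]? = some c

lemma take3_eq_iff (d : List Bool) (a b c : Bool) :
    d.take 3 = [a, b, c] ↔ (d[0]? = some a ∧ d[1]? = some b ∧ d[2]? = some c) := by
  match d with
  | [] => simp
  | [x] => simp
  | [x, y] => simp
  | x :: y :: z :: r => simp [List.take_succ_cons, and_assoc]

lemma occursAt_iff (a b c : Bool) (p : List Bool) (i : ℕ) :
    OccursAt [a, b, c] p i ↔ Trip a b c p i := by
  unfold OccursAt Trip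
  rw [show ([a, b, c] : List Bool).length = 3 from rfl, take3_eq_iff]
  rw [List.getElem?_drop, List.getElem?_drop, List.getElem?_drop]
  simp

/-- Ballot property starting from height `h`. -/
def BallotFrom (h : ℕ) (v : List Bool) : Prop :=
  ∀ k, (v.take k).count false ≤ h + (v.take k).count true

lemma ballotFrom_nil (h : ℕ) : BallotFrom h [] := by intro k; simp

lemma ballotFrom_mono {h h' : ℕ} {v : List Bool} (hh : h ≤ h') (H : BallotFrom h v) :
    BallotFrom h' v := fun k => le_trans (H k) (by omega)

lemma ballotFrom_cons_true {h : ℕ} {v : List Bool} (H : BallotFrom (h + 1) v) :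
    BallotFrom h (true :: v) := by
  intro k
  cases k with
  | zero => simp
  | succ k =>
    have := H k
    simp [List.take_succ_cons, List.count_cons]
    omega

lemma ballotFrom_cons_false {h : ℕ} {v : List Bool} (h1 : 1 ≤ h) (H : BallotFrom (h - 1) v) :
    BallotFrom h (false :: v) := by
  intro k
  cases k with
  | zero => simp
  | succ k =>
    have := H k
    simp [List.take_succ_cons, List.count_cons]
    omega

lemma ballotFrom_append {h e : ℕ} {A B : List Bool} (HA : BallotFrom h A)
    (hend : A.count false + e = A.count true + h) (HB : BallotFrom e B) :
    BallotFrom h (A ++ B) := by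
  intro k
  rcases le_or_gt k A.length with hk | hk
  · rw [List.take_append_of_le_length hk]; exact HA k
  · rw [List.take_append, List.take_of_length_le (by omega), List.count_append,
      List.count_append]
    have := HB (k - A.length)
    omega

/-- `fill h g` : a length-`g` word with no two consecutive U's, descending from
height `h` as fast as possible (then alternating `UD`). -/
def fill : ℕ → ℕ → List Bool
  | _, 0 => []
  | 0, 1 => [true]
  | 0, g + 2 => true :: false :: fill 0 g
  | h + 1, g + 1 => false :: fill h g

/-- ending height of `fill h g` started from height `h`. -/
def fillEnd (h g : ℕ) : ℕ := if g ≤ h then h - g else (g - h) % 2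

lemma fillEnd_le {a g H : ℕ} (hpar : (a + g) % 2 = H % 2) (h1 : a ≤ g + H) :
    fillEnd a g ≤ H := by
  unfold fillEnd; split <;> omega

lemma fillEnd_parity (h g : ℕ) : (fillEnd h g + h + g) % 2 = 0 := by
  unfold fillEnd; split <;> omega

lemma fill_length (h g : ℕ) : (fill h g).length = g := by
  induction h, g using fill.induct <;> simp [fill, *]

lemma fill_count (h g : ℕ) :
    (fill h g).count true + h = (fill h g).count false + fillEnd h g := by
  induction h, g using fill.induct <;>
    simp only [fill, List.count_cons, List.count_nil, fillEnd] at * <;> split_ifs at * <;>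
    simp_all <;> omega

lemma fill_ballot (h g : ℕ) : BallotFrom h (fill h g) := by
  induction h, g using fill.induct with
  | case1 h => simp only [fill]; exact ballotFrom_nil h
  | case2 => simp only [fill]; exact ballotFrom_cons_true (ballotFrom_nil 1)
  | case3 g ih =>
    simp only [fill]; exact ballotFrom_cons_true (ballotFrom_cons_false (by omega) ih)
  | case4 h g ih =>
    simp only [fill]; exact ballotFrom_cons_false (by omega) ih

lemma fill_noUU (h g : ℕ) : ∀ i, ¬((fill h g)[i]? = some true ∧ (fill h g)[i+1]? = some true) := by
  induction h, g using fill.induct with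
  | case1 h => intro i h'; simp [fill] at h'
  | case2 => intro i h'; rcases i with _ | i <;> simp [fill] at h'
  | case3 g ih =>
    intro i h'
    rcases i with _ | _ | i
    · simp [fill] at h'
    · simp [fill] at h'
    · exact ih i (by simpa [fill] using h')
  | case4 h g ih =>
    intro i h'
    rcases i with _ | i
    · simp [fill] at h'
    · exact ih i (by simpa [fill] using h')



/-- Build a ballot word from height `h`, current position `pos`, placing `UUD` blocks at
the absolute positions listed in `l`, total length `total - pos`, ending at height 0. -/
def buildU : ℕ → ℕ → List ℕ → ℕ → List Bool
  | h, pos, [], total => fill h (total - pos)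
  | h, pos, s :: l, total =>
      fill h (s - pos) ++ true :: true :: false ::
        buildU (fillEnd h (s - pos) + 1) (s + 3) l total

/-- Same, with `DUU` blocks; fillers keep height ≥ 1 between blocks. -/
def buildD : ℕ → ℕ → List ℕ → ℕ → List Bool
  | h, pos, [], total => fill h (total - pos)
  | h, pos, s :: l, total =>
      fill (h - 1) (s - pos) ++ false :: true :: true ::
        buildD (fillEnd (h - 1) (s - pos) + 2) (s + 3) l total

def OkU : ℕ → ℕ → List ℕ → ℕ → Prop
  | h, pos, [], total => pos + h ≤ total ∧ (h + pos) % 2 = total % 2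
  | h, pos, s :: l, total => pos ≤ s ∧ s + 3 ≤ total ∧ OkU (fillEnd h (s - pos) + 1) (s + 3) l total

def OkD : ℕ → ℕ → List ℕ → ℕ → Prop
  | h, pos, [], total => pos + h ≤ total ∧ (h + pos) % 2 = total % 2
  | h, pos, s :: l, total =>
      pos ≤ s ∧ s + 3 ≤ total ∧ 1 ≤ h ∧ OkD (fillEnd (h - 1) (s - pos) + 2) (s + 3) l total

lemma okU_mem {l : List ℕ} : ∀ {h pos total}, OkU h pos l total → ∀ x ∈ l, pos ≤ x := by
  induction l with
  | nil => intro _ _ _ _ x hx; simp at hx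
  | cons s l ih =>
    intro h pos total H x hx
    obtain ⟨h1, _, h3⟩ := H
    rcases List.mem_cons.mp hx with rfl | hx
    · exact h1
    · exact le_trans (by omega) (ih h3 x hx)

lemma okD_mem {l : List ℕ} : ∀ {h pos total}, OkD h pos l total → ∀ x ∈ l, pos ≤ x := by
  induction l with
  | nil => intro _ _ _ _ x hx; simp at hx
  | cons s l ih =>
    intro h pos total H x hx
    obtain ⟨h1, _, _, h4⟩ := H
    rcases List.mem_cons.mp hx with rfl | hx
    · exact h1
    · exact le_trans (by omega) (ih h4 x hx)

lemma buildU_length {l : List ℕ} : ∀ {h pos total}, OkU h pos l total →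
    (buildU h pos l total).length = total - pos := by
  induction l with
  | nil => intro h pos total _; simp [buildU, fill_length]
  | cons s l ih =>
    intro h pos total H
    obtain ⟨h1, h2, h3⟩ := H
    simp only [buildU, List.length_append, List.length_cons, fill_length, ih h3]
    omega

lemma buildD_length {l : List ℕ} : ∀ {h pos total}, OkD h pos l total →
    (buildD h pos l total).length = total - pos := by
  induction l with
  | nil => intro h pos total _; simp [buildD, fill_length]
  | cons s l ih =>
    intro h pos total H
    obtain ⟨h1, h2, _, h4⟩ := H
    simp only [buildD, List.length_append, List.length_cons, fill_length, ih h4]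
    omega

lemma buildU_count {l : List ℕ} : ∀ {h pos total}, OkU h pos l total →
    (buildU h pos l total).count false = (buildU h pos l total).count true + h := by
  induction l with
  | nil =>
    intro h pos total H
    obtain ⟨H1, H2⟩ := H
    have hf := fill_count h (total - pos)
    have he : fillEnd h (total - pos) = 0 := by
      unfold fillEnd; split <;> omega
    simp only [buildU]
    omega
  | cons s l ih =>
    intro h pos total H
    obtain ⟨h1, h2, h3⟩ := H
    have hf := fill_count h (s - pos)
    have hr := ih h3
    simp only [buildU, List.count_append, List.count_cons]
    simp
    omega

lemma buildD_count {l : List ℕ} : ∀ {h pos total}, OkD h pos l total →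
    (buildD h pos l total).count false = (buildD h pos l total).count true + h := by
  induction l with
  | nil =>
    intro h pos total H
    obtain ⟨H1, H2⟩ := H
    have hf := fill_count h (total - pos)
    have he : fillEnd h (total - pos) = 0 := by
      unfold fillEnd; split <;> omega
    simp only [buildD]
    omega
  | cons s l ih =>
    intro h pos total H
    obtain ⟨h1, h2, hh, h4⟩ := H
    have hf := fill_count (h - 1) (s - pos)
    have hr := ih h4
    simp only [buildD, List.count_append, List.count_cons]
    simp
    omega

lemma buildU_ballot {l : List ℕ} : ∀ {h pos total}, BallotFrom h (buildU h pos l total) := by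
  induction l with
  | nil => intro h pos total; simp only [buildU]; exact fill_ballot h (total - pos)
  | cons s l ih =>
    intro h pos total
    simp only [buildU]
    refine ballotFrom_append (e := fillEnd h (s - pos)) (fill_ballot h (s - pos)) ?_ ?_
    · have := fill_count h (s - pos); omega
    · refine ballotFrom_cons_true (ballotFrom_cons_true (ballotFrom_cons_false (by omega) ?_))
      have e2 : fillEnd h (s - pos) + 1 + 1 - 1 = fillEnd h (s - pos) + 1 := by omega
      rw [e2]; exact ih

lemma buildD_ballot {l : List ℕ} : ∀ {h pos total}, 1 ≤ h → BallotFrom h (buildD h pos l total) := by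
  induction l with
  | nil => intro h pos total _; simp only [buildD]; exact fill_ballot h (total - pos)
  | cons s l ih =>
    intro h pos total hh
    simp only [buildD]
    refine ballotFrom_append (e := fillEnd (h - 1) (s - pos) + 1) (ballotFrom_mono (by omega) (fill_ballot (h - 1) (s - pos))) ?_ ?_
    · have := fill_count (h - 1) (s - pos); omega
    · refine ballotFrom_cons_false (by omega) ?_
      have e2 : fillEnd (h - 1) (s - pos) + 1 - 1 = fillEnd (h - 1) (s - pos) := by omega
      rw [e2]
      refine ballotFrom_cons_true (ballotFrom_cons_true ?_)
      exact ih (by omega)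

section TripSpec

lemma getElem?_append_lt {A B : List Bool} {j : ℕ} (hj : j < A.length) :
    (A ++ B)[j]? = A[j]? := by
  rw [List.getElem?_append]; simp [hj]

lemma getElem?_append_add {A B : List Bool} (j : ℕ) :
    (A ++ B)[A.length + j]? = B[j]? := by
  rw [List.getElem?_append_right (Nat.le_add_right _ _)]
  congr 1
  omega


lemma cons3_get0 (b0 b1 b2 : Bool) (w : List Bool) : (b0 :: b1 :: b2 :: w)[0]? = some b0 := by simp
lemma cons3_get1 (b0 b1 b2 : Bool) (w : List Bool) : (b0 :: b1 :: b2 :: w)[1]? = some b1 := by simp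
lemma cons3_get2 (b0 b1 b2 : Bool) (w : List Bool) : (b0 :: b1 :: b2 :: w)[2]? = some b2 := by simp
lemma cons3_get3 (b0 b1 b2 : Bool) (w : List Bool) (j : ℕ) :
    (b0 :: b1 :: b2 :: w)[3 + j]? = w[j]? := by
  have e : 3 + j = (j + 1 + 1) + 1 := by omega
  rw [e, List.getElem?_cons_succ, List.getElem?_cons_succ, List.getElem?_cons_succ]

lemma buildU_trip {l : List ℕ} : ∀ {h pos total}, OkU h pos l total →
    ∀ i, Trip true true false (buildU h pos l total) i ↔ pos + i ∈ l := by
  induction l with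
  | nil =>
    intro h pos total _ i
    simp only [buildU, List.not_mem_nil, iff_false]
    rintro ⟨t1, t2, _⟩
    exact fill_noUU _ _ i ⟨t1, t2⟩
  | cons s l ih =>
    intro h pos total H i
    obtain ⟨h1, h2, h3⟩ := H
    have hmem : ∀ x ∈ l, s + 3 ≤ x := okU_mem h3
    simp only [buildU]
    set A := fill h (s - pos) with hA
    set w := buildU (fillEnd h (s - pos) + 1) (s + 3) l total with hw
    have hAl : A.length = s - pos := fill_length h (s - pos)
    have key : ∀ j, (A ++ (true :: true :: false :: w))[(s - pos) + j]? = (true :: true :: false :: w)[j]? := by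
      intro j
      have := getElem?_append_add (A := A) (B := (true :: true :: false :: w)) j
      rwa [hAl] at this
    by_cases hc1 : i + 1 < s - pos
    · constructor
      · rintro ⟨t1, t2, _⟩
        exact absurd ⟨by rwa [getElem?_append_lt (by omega)] at t1,
          by rwa [getElem?_append_lt (by omega)] at t2⟩ (fill_noUU h (s - pos) i)
      · intro hm
        rcases List.mem_cons.mp hm with hm | hm
        · omega
        · have := hmem _ hm; omega
    · by_cases hc2 : i + 1 = s - pos
      · constructor
        · rintro ⟨_, _, t3⟩
          have : (A ++ (true :: true :: false :: w))[i + 2]? = some true := by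
            have e : i + 2 = (s - pos) + 1 := by omega
            rw [e, key 1, cons3_get1]
          rw [this] at t3
          simp at t3
        · intro hm
          rcases List.mem_cons.mp hm with hm | hm
          · omega
          · have := hmem _ hm; omega
      · -- i ≥ s - pos
        have hge : s - pos ≤ i := by omega
        obtain ⟨j, rfl⟩ : ∃ j, i = (s - pos) + j := ⟨i - (s - pos), by omega⟩
        match j with
        | 0 =>
          constructor
          · intro _
            have : pos + (s - pos + 0) = s := by omega
            rw [this]; exact List.mem_cons_self
          · intro _
            refine ⟨by simpa [cons3_get0] using key 0, ?_, ?_⟩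
            · have e : s - pos + 0 + 1 = (s - pos) + 1 := by omega
              rw [e, key 1, cons3_get1]
            · have e : s - pos + 0 + 2 = (s - pos) + 2 := by omega
              rw [e, key 2, cons3_get2]
        | 1 =>
          constructor
          · rintro ⟨_, t2, _⟩
            have e : s - pos + 1 + 1 = (s - pos) + 2 := by omega
            rw [e, key 2, cons3_get2] at t2
            simp at t2
          · intro hm
            rcases List.mem_cons.mp hm with hm | hm
            · omega
            · have := hmem _ hm; omega
        | 2 =>
          constructor
          · rintro ⟨t1, _, _⟩
            have e : s - pos + 2 = (s - pos) + 2 := rfl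
            rw [e, key 2, cons3_get2] at t1
            simp at t1
          · intro hm
            rcases List.mem_cons.mp hm with hm | hm
            · omega
            · have := hmem _ hm; omega
        | (j + 3) =>
          have e0 : s - pos + (j + 3) = (s - pos) + (3 + j) := by omega
          have e1 : s - pos + (j + 3) + 1 = (s - pos) + (3 + (j + 1)) := by omega
          have e2 : s - pos + (j + 3) + 2 = (s - pos) + (3 + (j + 2)) := by omega
          have k0 : (A ++ (true :: true :: false :: w))[s - pos + (j+3)]? = w[j]? := by rw [e0, key, cons3_get3]
          have k1 : (A ++ (true :: true :: false :: w))[s - pos + (j+3) + 1]? = w[j+1]? := by rw [e1, key, cons3_get3]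
          have k2 : (A ++ (true :: true :: false :: w))[s - pos + (j+3) + 2]? = w[j+2]? := by rw [e2, key, cons3_get3]
          have hiw := ih h3 j
          constructor
          · rintro ⟨t1, t2, t3⟩
            rw [k0] at t1; rw [k1] at t2; rw [k2] at t3
            have : s + 3 + j ∈ l := hiw.mp ⟨t1, t2, t3⟩
            have e : pos + (s - pos + (j + 3)) = s + 3 + j := by omega
            rw [e]
            exact List.mem_cons_of_mem _ this
          · intro hm
            rcases List.mem_cons.mp hm with hm | hm
            · omega
            · have e : pos + (s - pos + (j + 3)) = s + 3 + j := by omega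
              rw [e] at hm
              obtain ⟨t1, t2, t3⟩ := hiw.mpr hm
              exact ⟨by rw [k0]; exact t1, by rw [k1]; exact t2, by rw [k2]; exact t3⟩

lemma buildD_trip {l : List ℕ} : ∀ {h pos total}, OkD h pos l total →
    ∀ i, Trip false true true (buildD h pos l total) i ↔ pos + i ∈ l := by
  induction l with
  | nil =>
    intro h pos total _ i
    simp only [buildD, List.not_mem_nil, iff_false]
    rintro ⟨_, t2, t3⟩
    exact fill_noUU _ _ (i + 1) ⟨t2, by rwa [show i+1+1 = i+2 from rfl]⟩
  | cons s l ih =>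
    intro h pos total H i
    obtain ⟨h1, h2, hh, h4⟩ := H
    have hmem : ∀ x ∈ l, s + 3 ≤ x := okD_mem h4
    simp only [buildD]
    set A := fill (h - 1) (s - pos) with hA
    set w := buildD (fillEnd (h - 1) (s - pos) + 2) (s + 3) l total with hw
    have hAl : A.length = s - pos := fill_length (h - 1) (s - pos)
    have key : ∀ j, (A ++ (false :: true :: true :: w))[(s - pos) + j]? = (false :: true :: true :: w)[j]? := by
      intro j
      have := getElem?_append_add (A := A) (B := (false :: true :: true :: w)) j
      rwa [hAl] at this
    by_cases hc1 : i + 2 < s - pos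
    · constructor
      · rintro ⟨_, t2, t3⟩
        exact absurd ⟨by rwa [getElem?_append_lt (by omega)] at t2,
          by rwa [getElem?_append_lt (by omega), show i+1+1 = i+2 from rfl] at t3⟩
          (fill_noUU (h - 1) (s - pos) (i + 1))
      · intro hm
        rcases List.mem_cons.mp hm with hm | hm
        · omega
        · have := hmem _ hm; omega
    · by_cases hc2 : i + 2 = s - pos
      · constructor
        · rintro ⟨_, _, t3⟩
          have : (A ++ (false :: true :: true :: w))[i + 2]? = some false := by
            have e : i + 2 = (s - pos) + 0 := by omega
            rw [e, key 0, cons3_get0]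
          rw [this] at t3
          simp at t3
        · intro hm
          rcases List.mem_cons.mp hm with hm | hm
          · omega
          · have := hmem _ hm; omega
      · by_cases hc3 : i + 1 = s - pos
        · constructor
          · rintro ⟨_, t2, _⟩
            have : (A ++ (false :: true :: true :: w))[i + 1]? = some false := by
              have e : i + 1 = (s - pos) + 0 := by omega
              rw [e, key 0, cons3_get0]
            rw [this] at t2
            simp at t2
          · intro hm
            rcases List.mem_cons.mp hm with hm | hm
            · omega
            · have := hmem _ hm; omega
        · have hge : s - pos ≤ i := by omega
          obtain ⟨j, rfl⟩ : ∃ j, i = (s - pos) + j := ⟨i - (s - pos), by omega⟩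
          match j with
          | 0 =>
            constructor
            · intro _
              have : pos + (s - pos + 0) = s := by omega
              rw [this]; exact List.mem_cons_self
            · intro _
              refine ⟨by simpa [cons3_get0] using key 0, ?_, ?_⟩
              · have e : s - pos + 0 + 1 = (s - pos) + 1 := by omega
                rw [e, key 1, cons3_get1]
              · have e : s - pos + 0 + 2 = (s - pos) + 2 := by omega
                rw [e, key 2, cons3_get2]
          | 1 =>
            constructor
            · rintro ⟨t1, _, _⟩
              have e : s - pos + 1 = (s - pos) + 1 := rfl
              rw [e, key 1, cons3_get1] at t1
              simp at t1
            · intro hm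
              rcases List.mem_cons.mp hm with hm | hm
              · omega
              · have := hmem _ hm; omega
          | 2 =>
            constructor
            · rintro ⟨t1, _, _⟩
              have e : s - pos + 2 = (s - pos) + 2 := rfl
              rw [e, key 2, cons3_get2] at t1
              simp at t1
            · intro hm
              rcases List.mem_cons.mp hm with hm | hm
              · omega
              · have := hmem _ hm; omega
          | (j + 3) =>
            have e0 : s - pos + (j + 3) = (s - pos) + (3 + j) := by omega
            have e1 : s - pos + (j + 3) + 1 = (s - pos) + (3 + (j + 1)) := by omega
            have e2 : s - pos + (j + 3) + 2 = (s - pos) + (3 + (j + 2)) := by omega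
            have k0 : (A ++ (false :: true :: true :: w))[s - pos + (j+3)]? = w[j]? := by rw [e0, key, cons3_get3]
            have k1 : (A ++ (false :: true :: true :: w))[s - pos + (j+3) + 1]? = w[j+1]? := by rw [e1, key, cons3_get3]
            have k2 : (A ++ (false :: true :: true :: w))[s - pos + (j+3) + 2]? = w[j+2]? := by rw [e2, key, cons3_get3]
            have hiw := ih h4 j
            constructor
            · rintro ⟨t1, t2, t3⟩
              rw [k0] at t1; rw [k1] at t2; rw [k2] at t3
              have : s + 3 + j ∈ l := hiw.mp ⟨t1, t2, t3⟩
              have e : pos + (s - pos + (j + 3)) = s + 3 + j := by omega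
              rw [e]
              exact List.mem_cons_of_mem _ this
            · intro hm
              rcases List.mem_cons.mp hm with hm | hm
              · omega
              · have e : pos + (s - pos + (j + 3)) = s + 3 + j := by omega
                rw [e] at hm
                obtain ⟨t1, t2, t3⟩ := hiw.mpr hm
                exact ⟨by rw [k0]; exact t1, by rw [k1]; exact t2, by rw [k2]; exact t3⟩

end TripSpec

section Counting

lemma count_take_split (p : List Bool) (x : Bool) (a d : ℕ) :
    (p.take (a + d)).count x = (p.take a).count x + ((p.drop a).take d).count x := by
  rw [List.take_add, List.count_append]

lemma count_tf (l : List Bool) : l.count true + l.count false = l.length := by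
  induction l with
  | nil => simp
  | cons a t ih => cases a <;> simp [List.count_cons] <;> omega

lemma seg_tf (p : List Bool) (a d : ℕ) (h : a + d ≤ p.length) :
    ((p.drop a).take d).count true + ((p.drop a).take d).count false = d := by
  rw [count_tf, List.length_take, List.length_drop]; omega

lemma cts (p : List Bool) (j : ℕ) (hj : j ≤ p.length) :
    (p.take j).count true + (p.take j).count false = j := by
  rw [count_tf, List.length_take]; omega

lemma occ_eq {a b c : Bool} {p : List Bool} {s : ℕ} (h : OccursAt [a, b, c] p s) :
    (p.drop s).take 3 = [a, b, c] := h

lemma occ_len {a b c : Bool} {p : List Bool} {s : ℕ} (h : OccursAt [a, b, c] p s) :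
    s + 3 ≤ p.length := by
  have := congrArg List.length (occ_eq h)
  rw [List.length_take, List.length_drop] at this
  simp at this
  omega

lemma occ_count3 {a b c : Bool} {p : List Bool} {s : ℕ} (h : OccursAt [a, b, c] p s) (x : Bool) :
    (p.take (s + 3)).count x = (p.take s).count x + ([a, b, c] : List Bool).count x := by
  rw [count_take_split p x s 3, occ_eq h]

lemma occ_count1 {a b c : Bool} {p : List Bool} {s : ℕ} (h : OccursAt [a, b, c] p s) (x : Bool) :
    (p.take (s + 1)).count x = (p.take s).count x + ([a] : List Bool).count x := by
  have h1 : (p.drop s).take 1 = [a] := by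
    rw [show (1 : ℕ) = min 1 3 from rfl, ← List.take_take, occ_eq h]
    rfl
  rw [count_take_split p x s 1, h1]

end Counting

section OkDerive

lemma okU_of_DUU (p : List Bool) (hb : IsBallot p) (hc : p.count true = p.count false) :
    ∀ (l : List ℕ) (h pos : ℕ),
      (∀ s ∈ l, OccursAt [false, true, true] p (s + 1)) →
      l.Pairwise (fun a b => a + 3 ≤ b) →
      (∀ s ∈ l, pos ≤ s) →
      pos + 1 ≤ p.length →
      h + 1 + (p.take (pos + 1)).count false ≤ (p.take (pos + 1)).count true →
      (h + pos) % 2 = 0 →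
      OkU h pos l (p.length - 2) := by
  intro l
  induction l with
  | nil =>
    intro h pos _ _ _ hp1 hinv hpar
    have w1 := count_take_split p true (pos + 1) (p.length - (pos + 1))
    have w2 := count_take_split p false (pos + 1) (p.length - (pos + 1))
    have w3 := seg_tf p (pos + 1) (p.length - (pos + 1)) (by omega)
    have e : pos + 1 + (p.length - (pos + 1)) = p.length := by omega
    rw [e, List.take_length] at w1 w2
    have hct := cts p (pos + 1) hp1
    constructor <;> omega
  | cons s l ih =>
    intro h pos hocc hpair hpos hp1 hinv hpar
    have hos : OccursAt [false, true, true] p (s + 1) := hocc s (List.mem_cons_self)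
    have hlen3 : s + 1 + 3 ≤ p.length := occ_len hos
    have c3t := occ_count3 hos true
    have c3f := occ_count3 hos false
    have c1t := occ_count1 hos true
    have c1f := occ_count1 hos false
    norm_num at c3t c3f c1t c1f
    have hspos : pos ≤ s := hpos s (List.mem_cons_self)
    -- the occurrence cannot touch the last two steps
    have hlast : s + 5 ≤ p.length := by
      by_contra hcon
      have he : s + 4 = p.length := by omega
      have hbt := hb (s + 1)
      rw [show s + 1 + 3 = s + 4 from rfl, he, List.take_length] at c3t c3f
      omega
    -- ballot at s+2 gives height ≥ 1 at s+1
    have hbal2 := hb (s + 2)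
    rw [show s + 2 = s + 1 + 1 from rfl] at hbal2
    have hbal1 := hb (s + 1)
    have hcts1 := cts p (s + 1) (by omega)
    -- window from pos+1 to s+1
    have w1 := count_take_split p true (pos + 1) (s - pos)
    have w2 := count_take_split p false (pos + 1) (s - pos)
    have w3 := seg_tf p (pos + 1) (s - pos) (by omega)
    have e : pos + 1 + (s - pos) = s + 1 := by omega
    rw [e] at w1 w2
    -- the greedy filler ends low enough
    have hfe : fillEnd h (s - pos) ≤ (p.take (s + 1)).count true - (p.take (s + 1)).count false - 1 := by
      apply fillEnd_le
      · omega
      · omega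
    have hfp := fillEnd_parity h (s - pos)
    refine ⟨hspos, by omega, ?_⟩
    apply ih (fillEnd h (s - pos) + 1) (s + 3)
    · intro x hx; exact hocc x (List.mem_cons_of_mem _ hx)
    · exact hpair.sublist (List.sublist_cons_self _ _)
    · intro x hx
      exact (List.pairwise_cons.mp hpair).1 x hx
    · omega
    · rw [show s + 3 + 1 = s + 1 + 3 from rfl]
      omega
    · omega

lemma okD_of_UUD (q : List Bool) (hb : IsBallot q) (hc : q.count true = q.count false) :
    ∀ (l : List ℕ) (h pos : ℕ),
      (∀ s ∈ l, OccursAt [true, true, false] q s) →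
      l.Pairwise (fun a b => a + 3 ≤ b) →
      (∀ s ∈ l, pos ≤ s) →
      pos ≤ q.length →
      1 ≤ h →
      h + (q.take pos).count false ≤ (q.take pos).count true + 1 →
      (h + pos) % 2 = 1 →
      OkD h pos l (q.length + 1) := by
  intro l
  induction l with
  | nil =>
    intro h pos _ _ _ hp1 hh hinv hpar
    have w1 := count_take_split q true pos (q.length - pos)
    have w2 := count_take_split q false pos (q.length - pos)
    have w3 := seg_tf q pos (q.length - pos) (by omega)
    have e : pos + (q.length - pos) = q.length := by omega
    rw [e, List.take_length] at w1 w2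
    have hct := cts q pos hp1
    constructor <;> omega
  | cons s l ih =>
    intro h pos hocc hpair hpos hp1 hh hinv hpar
    have hos : OccursAt [true, true, false] q s := hocc s (List.mem_cons_self)
    have hlen3 : s + 3 ≤ q.length := occ_len hos
    have c3t := occ_count3 hos true
    have c3f := occ_count3 hos false
    norm_num at c3t c3f
    have hspos : pos ≤ s := hpos s (List.mem_cons_self)
    have hbals := hb s
    have hctss := cts q s (by omega)
    -- window from pos to s
    have w1 := count_take_split q true pos (s - pos)
    have w2 := count_take_split q false pos (s - pos)
    have w3 := seg_tf q pos (s - pos) (by omega)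
    have e : pos + (s - pos) = s := by omega
    rw [e] at w1 w2
    have hfe : fillEnd (h - 1) (s - pos) ≤ (q.take s).count true - (q.take s).count false := by
      apply fillEnd_le
      · omega
      · omega
    have hfp := fillEnd_parity (h - 1) (s - pos)
    refine ⟨hspos, by omega, hh, ?_⟩
    apply ih (fillEnd (h - 1) (s - pos) + 2) (s + 3)
    · intro x hx; exact hocc x (List.mem_cons_of_mem _ hx)
    · exact hpair.sublist (List.sublist_cons_self _ _)
    · intro x hx
      exact (List.pairwise_cons.mp hpair).1 x hx
    · omega
    · omega
    · omega
    · omega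

end OkDerive

section OccListSec

instance occDecidable (τ p : List Bool) (i : ℕ) : Decidable (OccursAt τ p i) := by
  unfold OccursAt; exact inferInstance

def occList (τ p : List Bool) : List ℕ :=
  (List.range p.length).filter (fun i => decide (OccursAt τ p i))

lemma mem_occList {a b c : Bool} {p : List Bool} {i : ℕ} :
    i ∈ occList [a, b, c] p ↔ OccursAt [a, b, c] p i := by
  unfold occList
  rw [List.mem_filter, List.mem_range]
  constructor
  · rintro ⟨_, h⟩; exact of_decide_eq_true h
  · intro h; exact ⟨by have := occ_len h; omega, decide_eq_true h⟩

lemma occList_sorted (τ p : List Bool) : (occList τ p).Pairwise (· < ·) :=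
  List.pairwise_lt_range.sublist List.filter_sublist

lemma gap3_UUD {p : List Bool} {a b : ℕ} (h1 : OccursAt [true, true, false] p a)
    (h2 : OccursAt [true, true, false] p b) (hab : a < b) : a + 3 ≤ b := by
  rw [occursAt_iff] at h1 h2
  by_contra hcon
  have : b = a + 1 ∨ b = a + 2 := by omega
  rcases this with rfl | rfl
  · have e1 : p[a + 2]? = some false := h1.2.2
    have e2 : p[a + 2]? = some true := h2.2.1
    rw [e1] at e2; simp at e2
  · have e1 : p[a + 2]? = some false := h1.2.2
    have e2 : p[a + 2]? = some true := h2.1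
    rw [e1] at e2; simp at e2

lemma gap3_DUU {p : List Bool} {a b : ℕ} (h1 : OccursAt [false, true, true] p a)
    (h2 : OccursAt [false, true, true] p b) (hab : a < b) : a + 3 ≤ b := by
  rw [occursAt_iff] at h1 h2
  by_contra hcon
  have : b = a + 1 ∨ b = a + 2 := by omega
  rcases this with rfl | rfl
  · have e1 : p[a + 1]? = some true := h1.2.1
    have e2 : p[a + 1]? = some false := h2.1
    rw [e1] at e2; simp at e2
  · have e1 : p[a + 2]? = some true := h1.2.2
    have e2 : p[a + 2]? = some false := h2.1
    rw [e1] at e2; simp at e2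

lemma occD_ge_one {p : List Bool} {i : ℕ} (hb : IsBallot p)
    (h : OccursAt [false, true, true] p i) : 1 ≤ i := by
  by_contra hcon
  have hi : i = 0 := by omega
  subst hi
  have h0 : p[0]? = some false := ((occursAt_iff false true true p 0).mp h).1
  cases p with
  | nil => simp at h0
  | cons x t =>
    simp at h0
    have := hb 1
    simp [h0, List.count_cons] at this

lemma ballot_head {p : List Bool} (hb : IsBallot p) (hlen : 1 ≤ p.length) :
    p.take 1 = [true] := by
  cases p with
  | nil => simp at hlen
  | cons x t =>
    cases x
    · have := hb 1
      simp [List.count_cons] at this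
    · rfl

end OccListSec

section Assembly

def qOf (p : List Bool) : List Bool :=
  buildU 0 0 ((occList [false, true, true] p).map (· - 1)) (p.length - 2)

def pOf (q : List Bool) : List Bool :=
  true :: buildD 1 0 (occList [true, true, false] q) (q.length + 1)

lemma mem_map_sub_one {l : List ℕ} (h1 : ∀ x ∈ l, 1 ≤ x) (i : ℕ) :
    i ∈ l.map (· - 1) ↔ i + 1 ∈ l := by
  constructor
  · intro h
    obtain ⟨x, hx, rfl⟩ := List.mem_map.mp h
    have := h1 x hx
    have e : x - 1 + 1 = x := by omega
    rw [e]; exact hx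
  · intro h
    exact List.mem_map.mpr ⟨i + 1, h, by omega⟩

lemma qOf_ok {p : List Bool} (hd : IsDyck p) (hlen : 2 ≤ p.length) :
    OkU 0 0 ((occList [false, true, true] p).map (· - 1)) (p.length - 2) := by
  have hmem1 : ∀ x ∈ occList [false, true, true] p, 1 ≤ x :=
    fun x hx => occD_ge_one hd.1 (mem_occList.mp hx)
  have hoccm : ∀ s ∈ (occList [false, true, true] p).map (· - 1),
      OccursAt [false, true, true] p (s + 1) := by
    intro s hs
    obtain ⟨x, hx, rfl⟩ := List.mem_map.mp hs
    have := hmem1 x hx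
    have e : x - 1 + 1 = x := by omega
    rw [e]; exact mem_occList.mp hx
  have hpair : ((occList [false, true, true] p).map (· - 1)).Pairwise (fun a b => a + 3 ≤ b) := by
    have base : (occList [false, true, true] p).Pairwise (fun a b => a + 3 ≤ b ∧ 1 ≤ a) := by
      refine (occList_sorted _ _).imp_of_mem ?_
      intro a b ha hb hab
      exact ⟨gap3_DUU (mem_occList.mp ha) (mem_occList.mp hb) hab, hmem1 a ha⟩
    exact base.map _ (fun a b hab => by omega)
  apply okU_of_DUU p hd.1 hd.2 _ 0 0 hoccm hpair (fun _ _ => Nat.zero_le _) (by omega) ?_ (by simp)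
  rw [show (0 : ℕ) + 1 = 1 from rfl, ballot_head hd.1 (by omega)]
  simp

lemma qOf_spec {p : List Bool} (hd : IsDyck p) (hlen : 2 ≤ p.length) :
    IsDyck (qOf p) ∧ (qOf p).length = p.length - 2 ∧
      (∀ i, OccursAt [true, true, false] (qOf p) i ↔ OccursAt [false, true, true] p (i + 1)) := by
  have hok := qOf_ok hd hlen
  have hmem1 : ∀ x ∈ occList [false, true, true] p, 1 ≤ x :=
    fun x hx => occD_ge_one hd.1 (mem_occList.mp hx)
  refine ⟨⟨?_, ?_⟩, by simpa [qOf] using buildU_length hok, ?_⟩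
  · intro k
    have := buildU_ballot (l := (occList [false, true, true] p).map (· - 1)) (h := 0)
      (pos := 0) (total := p.length - 2) k
    simpa [qOf] using this
  · have := buildU_count hok
    unfold qOf
    omega
  · intro i
    rw [occursAt_iff]
    have ht := buildU_trip hok i
    unfold qOf
    rw [ht, show (0 : ℕ) + i = i from by omega, mem_map_sub_one hmem1 i, mem_occList]

lemma pOf_spec {q : List Bool} (hd : IsDyck q) :
    IsDyck (pOf q) ∧ (pOf q).length = q.length + 2 ∧
      (∀ i, OccursAt [false, true, true] (pOf q) i ↔
        1 ≤ i ∧ OccursAt [true, true, false] q (i - 1)) := by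
  have hpair : (occList [true, true, false] q).Pairwise (fun a b => a + 3 ≤ b) := by
    refine (occList_sorted _ _).imp_of_mem ?_
    intro a b ha hb hab
    exact gap3_UUD (mem_occList.mp ha) (mem_occList.mp hb) hab
  have hok : OkD 1 0 (occList [true, true, false] q) (q.length + 1) := by
    apply okD_of_UUD q hd.1 hd.2 _ 1 0 (fun s hs => mem_occList.mp hs) hpair
      (fun _ _ => Nat.zero_le _) (Nat.zero_le _) (le_refl 1) (by simp) (by simp)
  have hblen := buildD_length hok
  have hbcnt := buildD_count hok
  have hbbal : BallotFrom 1 (buildD 1 0 (occList [true, true, false] q) (q.length + 1)) :=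
    buildD_ballot (le_refl 1)
  refine ⟨⟨?_, ?_⟩, ?_, ?_⟩
  · intro k
    cases k with
    | zero => simp
    | succ k =>
      have := hbbal k
      unfold pOf
      simp only [List.take_succ_cons, List.count_cons]
      simp
      omega
  · unfold pOf
    simp only [List.count_cons]
    simp
    omega
  · unfold pOf
    simp only [List.length_cons]
    omega
  · intro i
    rw [occursAt_iff]
    cases i with
    | zero =>
      constructor
      · rintro ⟨t1, _, _⟩
        simp [pOf] at t1
      · rintro ⟨h1, _⟩; omega
    | succ j =>
      have e0 : (pOf q)[j + 1]? = (buildD 1 0 (occList [true, true, false] q) (q.length + 1))[j]? :=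
        List.getElem?_cons_succ
      have e1 : (pOf q)[j + 1 + 1]? =
          (buildD 1 0 (occList [true, true, false] q) (q.length + 1))[j + 1]? :=
        List.getElem?_cons_succ
      have e2 : (pOf q)[j + 1 + 2]? =
          (buildD 1 0 (occList [true, true, false] q) (q.length + 1))[j + 2]? := by
        rw [show j + 1 + 2 = (j + 2) + 1 from by omega]
        exact List.getElem?_cons_succ
      have ht := buildD_trip hok j
      unfold Trip at ht ⊢
      rw [e0, e1, e2, ht, show (0 : ℕ) + j = j from by omega, mem_occList]
      constructor
      · intro h; exact ⟨by omega, by simpa using h⟩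
      · rintro ⟨_, h⟩; simpa using h

lemma qOf_congr {p p' : List Bool} (h : PathEquiv [false, true, true] p p') : qOf p = qOf p' := by
  unfold qOf
  have hocc : occList [false, true, true] p = occList [false, true, true] p' := by
    unfold occList
    rw [h.1]
    exact List.filter_congr (fun i _ => decide_eq_decide.mpr (h.2 i))
  rw [hocc, h.1]

lemma pOf_congr {q q' : List Bool} (h : PathEquiv [true, true, false] q q') : pOf q = pOf q' := by
  unfold pOf
  have hocc : occList [true, true, false] q = occList [true, true, false] q' := by
    unfold occList
    rw [h.1]
    exact List.filter_congr (fun i _ => decide_eq_decide.mpr (h.2 i))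
  rw [hocc, h.1]

end Assembly

section Quotients

lemma roundtrip1 {p : List Bool} (hd : IsDyck p) (hlen : 2 ≤ p.length) :
    PathEquiv [false, true, true] (pOf (qOf p)) p := by
  obtain ⟨hq_dyck, hq_len, hq_occ⟩ := qOf_spec hd hlen
  obtain ⟨hp_dyck, hp_len, hp_occ⟩ := pOf_spec hq_dyck
  constructor
  · rw [hp_len, hq_len]; omega
  · intro i
    rw [hp_occ i]
    constructor
    · rintro ⟨h1, h2⟩
      have := (hq_occ (i - 1)).mp h2
      rwa [show i - 1 + 1 = i from by omega] at this
    · intro h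
      have h1 : 1 ≤ i := occD_ge_one hd.1 h
      refine ⟨h1, (hq_occ (i - 1)).mpr ?_⟩
      rwa [show i - 1 + 1 = i from by omega]

lemma roundtrip2 {q : List Bool} (hd : IsDyck q) :
    PathEquiv [true, true, false] (qOf (pOf q)) q := by
  obtain ⟨hp_dyck, hp_len, hp_occ⟩ := pOf_spec hd
  obtain ⟨hq_dyck, hq_len, hq_occ⟩ := qOf_spec hp_dyck (by omega)
  constructor
  · rw [hq_len, hp_len]; omega
  · intro i
    rw [hq_occ i, hp_occ (i + 1)]
    simp

def AtoB (n : ℕ) (p : {p : List Bool // IsDyck p ∧ p.length = 2 * (n + 1)}) :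
    {q : List Bool // IsDyck q ∧ q.length = 2 * n} :=
  ⟨qOf p.1, (qOf_spec p.2.1 (by omega)).1, by
    have := (qOf_spec p.2.1 (by have := p.2.2; omega)).2.1
    rw [this, p.2.2]; omega⟩

def BtoA (n : ℕ) (q : {q : List Bool // IsDyck q ∧ q.length = 2 * n}) :
    {p : List Bool // IsDyck p ∧ p.length = 2 * (n + 1)} :=
  ⟨pOf q.1, (pOf_spec q.2.1).1, by
    have := (pOf_spec q.2.1).2.1
    rw [this, q.2.2]; ring⟩

def mainEquiv (n : ℕ) :
    Quotient (dyckSetoid [false, true, true] (n + 1)) ≃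
      Quotient (dyckSetoid [true, true, false] n) where
  toFun := Quotient.lift
    (fun p => Quotient.mk (dyckSetoid [true, true, false] n) (AtoB n p))
    (by
      intro a b hab
      have : AtoB n a = AtoB n b := Subtype.ext (qOf_congr hab)
      rw [this])
  invFun := Quotient.lift
    (fun q => Quotient.mk (dyckSetoid [false, true, true] (n + 1)) (BtoA n q))
    (by
      intro a b hab
      have : BtoA n a = BtoA n b := Subtype.ext (pOf_congr hab)
      rw [this])
  left_inv := by
    intro x
    induction x using Quotient.ind with
    | _ p =>
      apply Quotient.sound
      exact roundtrip1 p.2.1 (by have := p.2.2; omega)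
  right_inv := by
    intro x
    induction x using Quotient.ind with
    | _ q =>
      apply Quotient.sound
      exact roundtrip2 q.2.1

end Quotients

end DyckAux

/-- the number of DUU-equivalence classes of Dyck paths of semilength
`n + 1` equals the number of UUD-equivalence classes of Dyck paths of semilength `n`. -/
theorem duu_uud_dyck_classes_shift (n : ℕ) :
    numDyckClasses [false, true, true] (n + 1) =
      numDyckClasses [true, true, false] n := by
  unfold numDyckClasses
  exact Nat.card_congr (DyckAux.mainEquiv n)
end
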